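/- Let 1 < p < 5, α > 0, β > 0, γ, μ, s ≥ 0, and let {uₙ} = {(u_{1,n}, u_{2,n}, u_{3,n})} be a minimizing sequence for I(γ, μ, s). Then: (i) there exists B > 0 such that Σ_{i=1}^{3} ‖∂ₓu_{i,n}‖²_{L²} ≤ B for all sufficiently large n; (ii) if γ > 0, there exists δ₁ > 0 such that ‖∂ₓu_{1,n}‖_{L²} ≥ δ₁ for all sufficiently large n; (iii) if μ > 0, there exists δ₂ > 0 such that ‖∂ₓu_{2,n}‖_{L²} ≥ δ₂ for all sufficiently large n; (iv) if s > 0, there exists δ₃ > 0 such that ‖∂ₓu_{3,n}‖_{L²} ≥ δ₃ for all sufficiently large n. -/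

import Mathlib

open MeasureTheory Filter Complex

noncomputable section

/-- Membership in `H¹(ℝ, ℂ)` (modeled via the classical derivative). -/
def InH1 (f : ℝ → ℂ) : Prop :=
  MemLp f 2 (volume : Measure ℝ) ∧ Differentiable ℝ f ∧
    MemLp (deriv f) 2 (volume : Measure ℝ)

/-- `‖f‖_{L²}²`. -/
def massSq (f : ℝ → ℂ) : ℝ := ∫ x : ℝ, ‖f x‖ ^ 2

/-- `‖∂ₓ f‖_{L²}²`. -/
def kinetic (f : ℝ → ℂ) : ℝ := ∫ x : ℝ, ‖deriv f x‖ ^ 2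

/-- `∫ |f|^{p+1}`. -/
def potential (p : ℝ) (f : ℝ → ℂ) : ℝ := ∫ x : ℝ, ‖f x‖ ^ (p + 1)

/-- `Re ∫ u₁ u₂ (conj u₃)`. -/
def interaction (u1 u2 u3 : ℝ → ℂ) : ℝ :=
  ∫ x : ℝ, (u1 x * u2 x * (starRingEnd ℂ) (u3 x)).re

/-- The energy functional `E`. -/
def energy (p α β : ℝ) (u1 u2 u3 : ℝ → ℂ) : ℝ :=
  ((1 / 2) * kinetic u1 - β / (p + 1) * potential p u1)
    + ((1 / 2) * kinetic u2 - β / (p + 1) * potential p u2)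
    + ((1 / 2) * kinetic u3 - β / (p + 1) * potential p u3)
    - α * interaction u1 u2 u3

/-- The set of energies of admissible triples for `I(γ, μ, s)`. -/
def constraintSet (p α β γ μ s : ℝ) : Set ℝ :=
  { e | ∃ u1 u2 u3 : ℝ → ℂ, InH1 u1 ∧ InH1 u2 ∧ InH1 u3 ∧
      massSq u1 = γ ∧ massSq u2 = μ ∧ massSq u3 = s ∧ e = energy p α β u1 u2 u3 }

/-- `I(γ, μ, s)`. -/
def Iinf (p α β γ μ s : ℝ) : ℝ := sInf (constraintSet p α β γ μ s)

/-- A minimizing sequence for `I(γ, μ, s)`. -/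
def MinimizingSeq (p α β γ μ s : ℝ) (u1 u2 u3 : ℕ → ℝ → ℂ) : Prop :=
  (∀ n, InH1 (u1 n) ∧ InH1 (u2 n) ∧ InH1 (u3 n)) ∧
  Tendsto (fun n => massSq (u1 n)) atTop (nhds γ) ∧
  Tendsto (fun n => massSq (u2 n)) atTop (nhds μ) ∧
  Tendsto (fun n => massSq (u3 n)) atTop (nhds s) ∧
  Tendsto (fun n => energy p α β (u1 n) (u2 n) (u3 n)) atTop
    (nhds (Iinf p α β γ μ s))

/-- `∫_{y-r}^{y+r} (|u₁|² + |u₂|² + |u₃|²)`. -/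
def localMass (u1 u2 u3 : ℝ → ℂ) (y r : ℝ) : ℝ :=
  ∫ x in Set.Icc (y - r) (y + r), (‖u1 x‖ ^ 2 + ‖u2 x‖ ^ 2 + ‖u3 x‖ ^ 2)

/-- `λ` is the concentration parameter of the sequence. -/
def IsConcentration (u1 u2 u3 : ℕ → ℝ → ℂ) (lam : ℝ) : Prop :=
  Tendsto (fun r : ℝ =>
      limsup (fun n => ⨆ y : ℝ, localMass (u1 n) (u2 n) (u3 n) y r) atTop)
    atTop (nhds lam)

/-- The squared `H¹` norm. -/
def H1normSq (f : ℝ → ℂ) : ℝ := massSq f + kinetic f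

/-- The `H¹(ℝ; ℂ³)` distance between two triples. -/
def H1dist3 (u v : (ℝ → ℂ) × (ℝ → ℂ) × (ℝ → ℂ)) : ℝ :=
  Real.sqrt (H1normSq (u.1 - v.1) + H1normSq (u.2.1 - v.2.1)
    + H1normSq (u.2.2 - v.2.2))

/-- The set `𝒢_{γ,μ,s}` of minimizers of `I(γ, μ, s)`. -/
def GSet (p α β γ μ s : ℝ) : Set ((ℝ → ℂ) × (ℝ → ℂ) × (ℝ → ℂ)) :=
  { u | InH1 u.1 ∧ InH1 u.2.1 ∧ InH1 u.2.2 ∧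
      massSq u.1 = γ ∧ massSq u.2.1 = μ ∧ massSq u.2.2 = s ∧
      energy p α β u.1 u.2.1 u.2.2 = Iinf p α β γ μ s }

/-- Symmetric decreasing rearrangement of a real function:
`f*(x) = |{t > 0 : x ∈ I_t}|` where `I_t` is the open interval centered at `0`
of length `|{ z : |f z| > t }|`. -/
def symmRearr (f : ℝ → ℝ) (x : ℝ) : ℝ :=
  (volume { t : ℝ | 0 < t ∧
      ENNReal.ofReal (2 * |x|) < volume { z : ℝ | t < |f z| } }).toReal

/-- The constraint set for `J(γ, μ)` (with `Q₁(u) = γ`, `Q₂(u) = μ`). -/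
def JconstraintSet (p α β γ μ : ℝ) : Set ℝ :=
  { e | ∃ u1 u2 u3 : ℝ → ℂ, InH1 u1 ∧ InH1 u2 ∧ InH1 u3 ∧
      massSq u1 + massSq u3 = γ ∧ massSq u2 + massSq u3 = μ ∧
      e = energy p α β u1 u2 u3 }

/-- `J(γ, μ)`. -/
def Jinf (p α β γ μ : ℝ) : ℝ := sInf (JconstraintSet p α β γ μ)

/-- A minimizing sequence for `J(γ, μ)`. -/
def JMinimizingSeq (p α β γ μ : ℝ) (u1 u2 u3 : ℕ → ℝ → ℂ) : Prop :=
  (∀ n, InH1 (u1 n) ∧ InH1 (u2 n) ∧ InH1 (u3 n)) ∧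
  Tendsto (fun n => massSq (u1 n) + massSq (u3 n)) atTop (nhds γ) ∧
  Tendsto (fun n => massSq (u2 n) + massSq (u3 n)) atTop (nhds μ) ∧
  Tendsto (fun n => energy p α β (u1 n) (u2 n) (u3 n)) atTop
    (nhds (Jinf p α β γ μ))

/-- The set `ℳ_{γ,μ}` of minimizers of `J(γ, μ)`. -/
def MSet (p α β γ μ : ℝ) : Set ((ℝ → ℂ) × (ℝ → ℂ) × (ℝ → ℂ)) :=
  { u | InH1 u.1 ∧ InH1 u.2.1 ∧ InH1 u.2.2 ∧
      massSq u.1 + massSq u.2.2 = γ ∧ massSq u.2.1 + massSq u.2.2 = μ ∧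
      energy p α β u.1 u.2.1 u.2.2 = Jinf p α β γ μ }

end
open MeasureTheory Filter Complex Real

noncomputable section

lemma massSq_nonneg (f : ℝ → ℂ) : 0 ≤ massSq f :=
  integral_nonneg fun x => by positivity

lemma kinetic_nonneg (f : ℝ → ℂ) : 0 ≤ kinetic f :=
  integral_nonneg fun x => by positivity

lemma potential_nonneg (p : ℝ) (f : ℝ → ℂ) : 0 ≤ potential p f :=
  integral_nonneg fun x => by positivity

lemma InH1.cont {f : ℝ → ℂ} (hf : InH1 f) : Continuous f := hf.2.1.continuous

lemma InH1.intSq {f : ℝ → ℂ} (hf : InH1 f) :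
    Integrable (fun x => ‖f x‖ ^ 2) volume :=
  ((memLp_two_iff_integrable_sq_norm hf.1.aestronglyMeasurable).mp hf.1)

lemma InH1.intDerivSq {f : ℝ → ℂ} (hf : InH1 f) :
    Integrable (fun x => ‖deriv f x‖ ^ 2) volume :=
  ((memLp_two_iff_integrable_sq_norm hf.2.2.aestronglyMeasurable).mp hf.2.2)

/-- pointwise AM-GM with parameter -/
lemma amgm_param {t : ℝ} (ht : 0 < t) (a b : ℝ) :
    a * b ≤ (t * a ^ 2 + t⁻¹ * b ^ 2) / 2 := by
  have h := mul_inv_cancel₀ (ne_of_gt ht)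
  nlinarith [sq_nonneg (t * a - b), mul_pos ht ht, sq_nonneg a, sq_nonneg b]

/-- Cauchy-Schwarz: integrability of a product of nonneg L² functions. -/
lemma cs_integrable {a b : ℝ → ℝ} (ha : AEStronglyMeasurable a volume)
    (hb : AEStronglyMeasurable b volume)
    (hIa : Integrable (fun x => a x ^ 2) volume)
    (hIb : Integrable (fun x => b x ^ 2) volume)
    (hna : ∀ x, 0 ≤ a x) (hnb : ∀ x, 0 ≤ b x) :
    Integrable (fun x => a x * b x) volume := by
  refine Integrable.mono' ((hIa.add hIb).div_const 2) (ha.mul hb)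
    (ae_of_all _ fun x => ?_)
  rw [Real.norm_eq_abs, _root_.abs_of_nonneg (mul_nonneg (hna x) (hnb x))]
  have := amgm_param one_pos (a x) (b x)
  simpa using this

/-- Cauchy-Schwarz inequality for integrals of nonneg functions. -/
lemma cs_bound {a b : ℝ → ℝ} (ha : AEStronglyMeasurable a volume)
    (hb : AEStronglyMeasurable b volume)
    (hIa : Integrable (fun x => a x ^ 2) volume)
    (hIb : Integrable (fun x => b x ^ 2) volume)
    (hna : ∀ x, 0 ≤ a x) (hnb : ∀ x, 0 ≤ b x) :
    ∫ x, a x * b x ≤ Real.sqrt (∫ x, a x ^ 2) * Real.sqrt (∫ x, b x ^ 2) := by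
  set A := ∫ x, a x ^ 2 with hA
  set B := ∫ x, b x ^ 2 with hB
  have hA0 : 0 ≤ A := integral_nonneg fun x => sq_nonneg _
  have hB0 : 0 ≤ B := integral_nonneg fun x => sq_nonneg _
  have key : ∀ t : ℝ, 0 < t → ∫ x, a x * b x ≤ (t * A + t⁻¹ * B) / 2 := by
    intro t ht
    have hint : Integrable (fun x => (t * a x ^ 2 + t⁻¹ * b x ^ 2) / 2) volume :=
      ((hIa.const_mul t).add (hIb.const_mul t⁻¹)).div_const 2
    calc ∫ x, a x * b x ≤ ∫ x, (t * a x ^ 2 + t⁻¹ * b x ^ 2) / 2 :=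
          integral_mono_of_nonneg (ae_of_all _ fun x => mul_nonneg (hna x) (hnb x))
            hint (ae_of_all _ fun x => amgm_param ht (a x) (b x))
      _ = (t * A + t⁻¹ * B) / 2 := by
          rw [integral_div, integral_add (hIa.const_mul t) (hIb.const_mul t⁻¹),
            integral_const_mul, integral_const_mul]
  rcases eq_or_lt_of_le hA0 with hA0' | hA0'
  · have : (fun x => a x ^ 2) =ᵐ[volume] 0 :=
      (integral_eq_zero_iff_of_nonneg (fun x => sq_nonneg _) hIa).mp hA0'.symm
    have hz : (fun x => a x * b x) =ᵐ[volume] 0 := by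
      filter_upwards [this] with x hx
      have : a x = 0 := by
        have := pow_eq_zero_iff (n := 2) (by norm_num) |>.mp hx
        exact this
      simp [this]
    rw [integral_congr_ae hz]
    simp [mul_nonneg (Real.sqrt_nonneg _) (Real.sqrt_nonneg _)]
  rcases eq_or_lt_of_le hB0 with hB0' | hB0'
  · have : (fun x => b x ^ 2) =ᵐ[volume] 0 :=
      (integral_eq_zero_iff_of_nonneg (fun x => sq_nonneg _) hIb).mp hB0'.symm
    have hz : (fun x => a x * b x) =ᵐ[volume] 0 := by
      filter_upwards [this] with x hx
      have : b x = 0 := pow_eq_zero_iff (n := 2) (by norm_num) |>.mp hx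
      simp [this]
    rw [integral_congr_ae hz]
    simp [mul_nonneg (Real.sqrt_nonneg _) (Real.sqrt_nonneg _)]
  · have ht : 0 < Real.sqrt B / Real.sqrt A :=
      div_pos (Real.sqrt_pos.mpr hB0') (Real.sqrt_pos.mpr hA0')
    refine (key _ ht).trans (le_of_eq ?_)
    have hsA : Real.sqrt A ≠ 0 := ne_of_gt (Real.sqrt_pos.mpr hA0')
    have hsB : Real.sqrt B ≠ 0 := ne_of_gt (Real.sqrt_pos.mpr hB0')
    have hAA : Real.sqrt A * Real.sqrt A = A := Real.mul_self_sqrt hA0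
    have hBB : Real.sqrt B * Real.sqrt B = B := Real.mul_self_sqrt hB0
    field_simp
    nlinarith [hAA, hBB]

end
open MeasureTheory Filter Complex Real

noncomputable section

lemma exists_small {g : ℝ → ℝ} (hg : Integrable g volume) (hgn : ∀ x, 0 ≤ g x)
    {ε : ℝ} (hε : 0 < ε) : ∃ y, g y ≤ ε := by
  by_contra h
  push_neg at h
  have hc : Integrable (fun _ : ℝ => ε) volume := by
    refine hg.mono' aestronglyMeasurable_const (ae_of_all _ fun x => ?_)
    rw [Real.norm_eq_abs, _root_.abs_of_pos hε]
    exact (h x).le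
  rw [integrable_const_iff] at hc
  rcases hc with h1 | h2
  · exact (ne_of_gt hε) h1
  · have h3 : (volume : Measure ℝ) (Set.Ici (0:ℝ)) ≤ volume Set.univ :=
      measure_mono (Set.subset_univ _)
    rw [Real.volume_Ici] at h3
    exact (ne_of_lt (lt_of_le_of_lt h3 (@measure_lt_top _ _ volume h2 Set.univ))) rfl |>.elim

lemma norm_sq_complex (z : ℂ) : ‖z‖ ^ 2 = z.re ^ 2 + z.im ^ 2 := by
  rw [Complex.sq_norm, Complex.normSq_apply]; ring

/-- derivative of the squared norm -/
lemma hasDerivAt_normSq {f : ℝ → ℂ} (hf : Differentiable ℝ f) (t : ℝ) :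
    HasDerivAt (fun y => ‖f y‖ ^ 2)
      (2 * ((f t).re * (deriv f t).re + (f t).im * (deriv f t).im)) t := by
  have hft : HasDerivAt f (deriv f t) t := (hf t).hasDerivAt
  have hre : HasDerivAt (fun y => (f y).re) ((deriv f t).re) t :=
    (Complex.reCLM.hasFDerivAt.comp_hasDerivAt t hft)
  have him : HasDerivAt (fun y => (f y).im) ((deriv f t).im) t :=
    (Complex.imCLM.hasFDerivAt.comp_hasDerivAt t hft)
  have h1 := (hre.pow 2).add (him.pow 2)
  have heq : (fun y => ‖f y‖ ^ 2) = fun y => (f y).re ^ 2 + (f y).im ^ 2 := by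
    funext y; exact norm_sq_complex _
  rw [heq]
  refine h1.congr_deriv ?_
  ring

lemma inner_abs_le (z w : ℂ) :
    |z.re * w.re + z.im * w.im| ≤ ‖z‖ * ‖w‖ := by
  have h1 : (z.re * w.re + z.im * w.im) ^ 2 ≤ (‖z‖ * ‖w‖) ^ 2 := by
    rw [mul_pow, norm_sq_complex, norm_sq_complex]
    nlinarith [sq_nonneg (z.re * w.im - z.im * w.re)]
  calc |z.re * w.re + z.im * w.im| = Real.sqrt ((z.re * w.re + z.im * w.im) ^ 2) :=
        (Real.sqrt_sq_eq_abs _).symm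
    _ ≤ Real.sqrt ((‖z‖ * ‖w‖) ^ 2) := Real.sqrt_le_sqrt h1
    _ = ‖z‖ * ‖w‖ := by
        rw [Real.sqrt_sq (mul_nonneg (norm_nonneg _) (norm_nonneg _))]

/-- 1D Sobolev sup bound. -/
lemma InH1.sq_norm_le {f : ℝ → ℂ} (hf : InH1 f) (x : ℝ) :
    ‖f x‖ ^ 2 ≤ 2 * (Real.sqrt (massSq f) * Real.sqrt (kinetic f)) := by
  set G : ℝ → ℝ := fun t => 2 * (‖f t‖ * ‖deriv f t‖) with hGdef
  have haf : AEStronglyMeasurable (fun t => ‖f t‖) volume :=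
    hf.cont.norm.aestronglyMeasurable
  have hadf : AEStronglyMeasurable (fun t => ‖deriv f t‖) volume :=
    ((measurable_deriv f).norm).aestronglyMeasurable
  have hGint : Integrable G volume := by
    have := cs_integrable haf hadf hf.intSq hf.intDerivSq
      (fun x => norm_nonneg _) (fun x => norm_nonneg _)
    exact (this.const_mul 2)
  have hGbnd : ∫ t, G t ≤ 2 * (Real.sqrt (massSq f) * Real.sqrt (kinetic f)) := by
    rw [hGdef, integral_const_mul]
    have := cs_bound haf hadf hf.intSq hf.intDerivSq
      (fun x => norm_nonneg _) (fun x => norm_nonneg _)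
    have h2 : (0:ℝ) ≤ 2 := by norm_num
    exact mul_le_mul_of_nonneg_left this h2
  set g' : ℝ → ℝ := fun t =>
    2 * ((f t).re * (deriv f t).re + (f t).im * (deriv f t).im) with hg'def
  have hg'm : AEStronglyMeasurable g' volume := by
    have h1 : Measurable fun t => (deriv f t).re :=
      Complex.measurable_re.comp (measurable_deriv f)
    have h2 : Measurable fun t => (deriv f t).im :=
      Complex.measurable_im.comp (measurable_deriv f)
    have h3 : Measurable fun t => (f t).re :=
      Complex.measurable_re.comp hf.cont.measurable
    have h4 : Measurable fun t => (f t).im :=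
      Complex.measurable_im.comp hf.cont.measurable
    exact (((h3.mul h1).add (h4.mul h2)).const_mul 2).aestronglyMeasurable
  have hg'le : ∀ t, ‖g' t‖ ≤ G t := by
    intro t
    rw [Real.norm_eq_abs, hg'def]
    have := inner_abs_le (f t) (deriv f t)
    rw [abs_mul, _root_.abs_two]
    have h2 : (0:ℝ) ≤ 2 := by norm_num
    exact mul_le_mul_of_nonneg_left this h2
  have hg'int : Integrable g' volume :=
    hGint.mono' hg'm (ae_of_all _ hg'le)
  -- FTC
  have key : ∀ y : ℝ, ‖f x‖ ^ 2 ≤ ‖f y‖ ^ 2 + ∫ t, G t := by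
    intro y
    have hftc : ∫ t in y..x, g' t = ‖f x‖ ^ 2 - ‖f y‖ ^ 2 :=
      intervalIntegral.integral_eq_sub_of_hasDerivAt
        (fun t _ => hasDerivAt_normSq hf.2.1 t) (hg'int.intervalIntegrable)
    have habs : |∫ t in y..x, g' t| ≤ ∫ t, G t := by
      have hle : ∀ (a b : ℝ), a ≤ b → |∫ t in a..b, g' t| ≤ ∫ t, G t := by
        intro a b hab
        calc |∫ t in a..b, g' t| ≤ ∫ t in a..b, ‖g' t‖ := by
              simpa [Real.norm_eq_abs] using
                intervalIntegral.norm_integral_le_integral_norm (f := g') hab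
          _ ≤ ∫ t in a..b, G t := by
              rw [intervalIntegral.integral_of_le hab,
                intervalIntegral.integral_of_le hab]
              refine setIntegral_mono_on (hg'int.norm.integrableOn)
                (hGint.integrableOn) measurableSet_Ioc fun t _ => hg'le t
          _ ≤ ∫ t, G t := by
              rw [intervalIntegral.integral_of_le hab]
              refine setIntegral_le_integral hGint (ae_of_all _ fun t => ?_)
              positivity
      rcases le_total y x with h | h
      · exact hle y x h
      · rw [intervalIntegral.integral_symm]
        rw [abs_neg]
        exact hle x y h
    have := abs_le.mp habs
    nlinarith [hftc, this.1, this.2]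
  -- conclude
  refine le_of_forall_pos_le_add fun ε hε => ?_
  obtain ⟨y, hy⟩ := exists_small hf.intSq (fun t => sq_nonneg ‖f t‖) hε
  have hy' : ‖f y‖ ^ 2 ≤ ε := hy
  have h5 := key y
  linarith [hGbnd]

end
noncomputable section

open MeasureTheory Filter Complex Real

/-- `∫ ‖u1‖‖u2‖‖u3‖`. -/
def Tint (u1 u2 u3 : ℝ → ℂ) : ℝ := ∫ x, ‖u1 x‖ * ‖u2 x‖ * ‖u3 x‖

lemma Tint_nonneg (u1 u2 u3 : ℝ → ℂ) : 0 ≤ Tint u1 u2 u3 :=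
  integral_nonneg fun x => by positivity

lemma Tint_comm12 (u1 u2 u3 : ℝ → ℂ) : Tint u1 u2 u3 = Tint u2 u1 u3 := by
  unfold Tint; congr 1; funext x; ring

lemma Tint_comm13 (u1 u2 u3 : ℝ → ℂ) : Tint u1 u2 u3 = Tint u3 u2 u1 := by
  unfold Tint; congr 1; funext x; ring

lemma prod_norm_integrable {u2 u3 : ℝ → ℂ} (hu2 : InH1 u2) (hu3 : InH1 u3) :
    Integrable (fun x => ‖u2 x‖ * ‖u3 x‖) volume :=
  cs_integrable hu2.cont.norm.aestronglyMeasurable hu3.cont.norm.aestronglyMeasurable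
    hu2.intSq hu3.intSq (fun _ => norm_nonneg _) (fun _ => norm_nonneg _)

lemma prod_norm_bound {u2 u3 : ℝ → ℂ} (hu2 : InH1 u2) (hu3 : InH1 u3) :
    ∫ x, ‖u2 x‖ * ‖u3 x‖ ≤ Real.sqrt (massSq u2) * Real.sqrt (massSq u3) :=
  cs_bound hu2.cont.norm.aestronglyMeasurable hu3.cont.norm.aestronglyMeasurable
    hu2.intSq hu3.intSq (fun _ => norm_nonneg _) (fun _ => norm_nonneg _)

lemma InH1.norm_le {f : ℝ → ℂ} (hf : InH1 f) (x : ℝ) :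
    ‖f x‖ ≤ Real.sqrt (2 * (Real.sqrt (massSq f) * Real.sqrt (kinetic f))) := by
  have h := hf.sq_norm_le x
  calc ‖f x‖ = Real.sqrt (‖f x‖ ^ 2) := (Real.sqrt_sq (norm_nonneg _)).symm
    _ ≤ _ := Real.sqrt_le_sqrt h

lemma Tint_integrable {u1 u2 u3 : ℝ → ℂ} (hu1 : InH1 u1) (hu2 : InH1 u2)
    (hu3 : InH1 u3) :
    Integrable (fun x => ‖u1 x‖ * ‖u2 x‖ * ‖u3 x‖) volume := by
  set S := Real.sqrt (2 * (Real.sqrt (massSq u1) * Real.sqrt (kinetic u1)))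
  refine Integrable.mono' ((prod_norm_integrable hu2 hu3).const_mul S)
    (((hu1.cont.norm.mul hu2.cont.norm).mul hu3.cont.norm).aestronglyMeasurable)
    (ae_of_all _ fun x => ?_)
  show ‖‖u1 x‖ * ‖u2 x‖ * ‖u3 x‖‖ ≤ S * (‖u2 x‖ * ‖u3 x‖)
  rw [Real.norm_eq_abs, _root_.abs_of_nonneg (by positivity)]
  have h1 := hu1.norm_le x
  calc ‖u1 x‖ * ‖u2 x‖ * ‖u3 x‖ = ‖u1 x‖ * (‖u2 x‖ * ‖u3 x‖) := by ring
    _ ≤ S * (‖u2 x‖ * ‖u3 x‖) := mul_le_mul_of_nonneg_right h1 (by positivity)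

lemma Tint_le {u1 u2 u3 : ℝ → ℂ} (hu1 : InH1 u1) (hu2 : InH1 u2) (hu3 : InH1 u3) :
    Tint u1 u2 u3 ≤ Real.sqrt (2 * (Real.sqrt (massSq u1) * Real.sqrt (kinetic u1)))
      * (Real.sqrt (massSq u2) * Real.sqrt (massSq u3)) := by
  set S := Real.sqrt (2 * (Real.sqrt (massSq u1) * Real.sqrt (kinetic u1))) with hS
  have hS0 : 0 ≤ S := Real.sqrt_nonneg _
  have step1 : Tint u1 u2 u3 ≤ S * ∫ x, ‖u2 x‖ * ‖u3 x‖ := by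
    rw [← integral_const_mul]
    refine integral_mono_of_nonneg (ae_of_all _ fun x => by positivity)
      ((prod_norm_integrable hu2 hu3).const_mul S) (ae_of_all _ fun x => ?_)
    show ‖u1 x‖ * ‖u2 x‖ * ‖u3 x‖ ≤ S * (‖u2 x‖ * ‖u3 x‖)
    have h1 := hu1.norm_le x
    calc ‖u1 x‖ * ‖u2 x‖ * ‖u3 x‖ = ‖u1 x‖ * (‖u2 x‖ * ‖u3 x‖) := by ring
      _ ≤ S * (‖u2 x‖ * ‖u3 x‖) := mul_le_mul_of_nonneg_right h1 (by positivity)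
  refine step1.trans ?_
  exact mul_le_mul_of_nonneg_left (prod_norm_bound hu2 hu3) hS0

lemma abs_interaction_le {u1 u2 u3 : ℝ → ℂ} (hu1 : InH1 u1) (hu2 : InH1 u2)
    (hu3 : InH1 u3) : |interaction u1 u2 u3| ≤ Tint u1 u2 u3 := by
  have hpt : ∀ x, |(u1 x * u2 x * (starRingEnd ℂ) (u3 x)).re|
      ≤ ‖u1 x‖ * ‖u2 x‖ * ‖u3 x‖ := by
    intro x
    calc |(u1 x * u2 x * (starRingEnd ℂ) (u3 x)).re|
        ≤ ‖u1 x * u2 x * (starRingEnd ℂ) (u3 x)‖ :=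
          Complex.abs_re_le_norm _
      _ = ‖u1 x‖ * ‖u2 x‖ * ‖u3 x‖ := by
          simp [map_mul]
  calc |interaction u1 u2 u3| ≤ ∫ x, |(u1 x * u2 x * (starRingEnd ℂ) (u3 x)).re| := by
        have h0 := norm_integral_le_integral_norm (μ := (volume : Measure ℝ))
          (f := fun x => (u1 x * u2 x * (starRingEnd ℂ) (u3 x)).re)
        simp only [Real.norm_eq_abs] at h0
        exact h0
    _ ≤ Tint u1 u2 u3 :=
        integral_mono_of_nonneg (ae_of_all _ fun x => abs_nonneg _)
          (Tint_integrable hu1 hu2 hu3) (ae_of_all _ fun x => hpt x)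

lemma potential_le {p : ℝ} (hp : 1 ≤ p) {f : ℝ → ℂ} (hf : InH1 f) :
    potential p f ≤ (2 * (Real.sqrt (massSq f) * Real.sqrt (kinetic f)))
      ^ ((p - 1) / 2) * massSq f := by
  set S2 := 2 * (Real.sqrt (massSq f) * Real.sqrt (kinetic f)) with hS2
  have hS20 : 0 ≤ S2 := by positivity
  have hq0 : 0 ≤ (p - 1) / 2 := by linarith
  have hpt : ∀ x, ‖f x‖ ^ (p + 1) ≤ S2 ^ ((p - 1) / 2) * ‖f x‖ ^ 2 := by
    intro x
    rcases eq_or_lt_of_le (norm_nonneg (f x)) with h0 | h0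
    · rw [← h0, Real.zero_rpow (by linarith : p + 1 ≠ 0)]
      positivity
    · have key : ‖f x‖ ^ (p + 1) = ‖f x‖ ^ (p - 1) * ‖f x‖ ^ (2:ℝ) := by
        rw [← Real.rpow_add h0]; ring_nf
      have h2 : ‖f x‖ ^ (p - 1) = (‖f x‖ ^ (2:ℝ)) ^ ((p - 1) / 2) := by
        rw [← Real.rpow_mul (norm_nonneg _)]; ring_nf
      have h3 : (‖f x‖ ^ (2:ℝ)) ^ ((p - 1) / 2) ≤ S2 ^ ((p - 1) / 2) := by
        apply Real.rpow_le_rpow (by positivity) _ hq0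
        rw [Real.rpow_two]
        exact hf.sq_norm_le x
      have h4 : ‖f x‖ ^ (2:ℝ) = ‖f x‖ ^ 2 := Real.rpow_two _
      calc ‖f x‖ ^ (p + 1) = ‖f x‖ ^ (p - 1) * ‖f x‖ ^ (2:ℝ) := key
        _ ≤ S2 ^ ((p - 1) / 2) * ‖f x‖ ^ (2:ℝ) :=
            mul_le_mul_of_nonneg_right (h2 ▸ h3) (by positivity)
        _ = S2 ^ ((p - 1) / 2) * ‖f x‖ ^ 2 := by rw [h4]
  calc potential p f ≤ ∫ x, S2 ^ ((p - 1) / 2) * ‖f x‖ ^ 2 :=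
        integral_mono_of_nonneg (ae_of_all _ fun x => by positivity)
          (hf.intSq.const_mul _) (ae_of_all _ fun x => hpt x)
    _ = S2 ^ ((p - 1) / 2) * massSq f := integral_const_mul _ _

end
noncomputable section

open MeasureTheory Filter Complex Real

lemma sqrt_rpow' {x : ℝ} (hx : 0 ≤ x) (y : ℝ) :
    (Real.sqrt x) ^ y = x ^ (y / 2) := by
  rw [Real.sqrt_eq_rpow, ← Real.rpow_mul hx]
  ring_nf

lemma rpow_eps {ε a : ℝ} (hε : 0 < ε) (ha0 : 0 < a) (ha1 : a < 1) {t : ℝ}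
    (ht : 0 ≤ t) : t ^ a ≤ ε * t + (ε⁻¹) ^ (a / (1 - a)) := by
  have h1a : 0 < 1 - a := by linarith
  set T := (ε⁻¹) ^ ((1:ℝ) / (1 - a)) with hT
  have hT0 : 0 < T := Real.rpow_pos_of_pos (inv_pos.mpr hε) _
  have hTa : T ^ a = (ε⁻¹) ^ (a / (1 - a)) := by
    rw [hT, ← Real.rpow_mul (inv_pos.mpr hε).le]
    congr 1; field_simp
  rcases le_total t T with h | h
  · have : t ^ a ≤ T ^ a := Real.rpow_le_rpow ht h ha0.le
    have hεt : 0 ≤ ε * t := mul_nonneg hε.le ht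
    rw [← hTa]; linarith
  · have ht0 : 0 < t := lt_of_lt_of_le hT0 h
    have hkey : t ^ (a - 1) ≤ ε := by
      have hT1a : T ^ (1 - a) = ε⁻¹ := by
        rw [hT, ← Real.rpow_mul (inv_pos.mpr hε).le]
        rw [one_div, inv_mul_cancel₀ (ne_of_gt h1a), Real.rpow_one]
      have h2 : T ^ (1 - a) ≤ t ^ (1 - a) := Real.rpow_le_rpow hT0.le h h1a.le
      have h3 : ε⁻¹ ≤ t ^ (1 - a) := hT1a ▸ h2
      have h4 : (t ^ (1 - a))⁻¹ ≤ ε := by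
        rw [← inv_inv ε]
        exact inv_anti₀ (inv_pos.mpr hε) h3
      have h5 : t ^ (a - 1) = (t ^ (1 - a))⁻¹ := by
        rw [← Real.rpow_neg ht0.le]; congr 1; ring
      rw [h5]; exact h4
    have heq : t ^ a = t * t ^ (a - 1) := by
      nth_rewrite 2 [← Real.rpow_one t]
      rw [← Real.rpow_add ht0]
      congr 1; ring
    rw [heq]
    have h5 : t * t ^ (a - 1) ≤ t * ε := mul_le_mul_of_nonneg_left hkey ht0.le
    have h6 : 0 ≤ (ε⁻¹) ^ (a / (1 - a)) := Real.rpow_nonneg (inv_pos.mpr hε).le _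
    linarith [h5, h6]

lemma absorb {c a : ℝ} (hc : 0 ≤ c) (ha0 : 0 < a) (ha1 : a < 1) {t : ℝ}
    (ht : 0 ≤ t) :
    c * t ^ a ≤ t / 8 + c * (8 * (c + 1)) ^ (a / (1 - a)) := by
  have hd : (0:ℝ) < 8 * (c + 1) := by linarith
  have hε : 0 < (8 * (c + 1) : ℝ)⁻¹ := inv_pos.mpr hd
  have h := rpow_eps hε ha0 ha1 ht
  rw [inv_inv] at h
  have h2 : c * t ^ a ≤ c * ((8 * (c + 1))⁻¹ * t + (8 * (c + 1)) ^ (a / (1 - a))) :=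
    mul_le_mul_of_nonneg_left h hc
  have h3 : c * ((8 * (c + 1))⁻¹ * t) ≤ t / 8 := by
    rw [← mul_assoc]
    have hce : c * (8 * (c + 1))⁻¹ ≤ 8⁻¹ := by
      rw [mul_inv_le_iff₀ hd]
      rw [inv_eq_one_div, div_mul_eq_mul_div, le_div_iff₀ (by norm_num : (0:ℝ) < 8)]
      nlinarith
    calc c * (8 * (c + 1))⁻¹ * t ≤ 8⁻¹ * t := mul_le_mul_of_nonneg_right hce ht
      _ = t / 8 := by ring
  nlinarith [h2, h3]

lemma exists_small_rpow {A q ζ : ℝ} (hA : 0 ≤ A) (hq : 0 < q) (hζ : 0 < ζ) :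
    ∃ ε : ℝ, 0 < ε ∧ ε ≤ 1 ∧ ∀ x, 0 ≤ x → x ≤ ε → A * x ^ q ≤ ζ := by
  set r := min 1 (ζ / (A + 1)) with hr
  have hr0 : 0 < r := lt_min one_pos (div_pos hζ (by linarith))
  have hr1 : r ≤ 1 := min_le_left _ _
  refine ⟨r ^ (1 / q), Real.rpow_pos_of_pos hr0 _,
    Real.rpow_le_one hr0.le hr1 (by positivity), fun x hx hxε => ?_⟩
  have h1 : x ^ q ≤ (r ^ (1 / q)) ^ q := Real.rpow_le_rpow hx hxε hq.le
  have h2 : (r ^ (1 / q)) ^ q = r := by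
    rw [← Real.rpow_mul hr0.le, one_div, inv_mul_cancel₀ (ne_of_gt hq), Real.rpow_one]
  have h3 : A * x ^ q ≤ A * r := by
    rw [← h2]; exact mul_le_mul_of_nonneg_left h1 hA
  have h4 : A * r ≤ A * (ζ / (A + 1)) :=
    mul_le_mul_of_nonneg_left (min_le_right _ _) hA
  have h5 : A * (ζ / (A + 1)) ≤ ζ := by
    rw [mul_div_assoc'] at *
    rw [div_le_iff₀ (by linarith : (0:ℝ) < A + 1)]
    nlinarith
  linarith

/-- The explicit constant in the coercivity bound. -/
def Dconst (p α β M1 M2 M3 : ℝ) : ℝ :=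
  (β / (p + 1) * (2:ℝ) ^ ((p - 1) / 2)
      * (M1 ^ ((p - 1) / 4) * M1 + M2 ^ ((p - 1) / 4) * M2 + M3 ^ ((p - 1) / 4) * M3))
    * (8 * ((β / (p + 1) * (2:ℝ) ^ ((p - 1) / 2)
      * (M1 ^ ((p - 1) / 4) * M1 + M2 ^ ((p - 1) / 4) * M2 + M3 ^ ((p - 1) / 4) * M3)) + 1))
      ^ (((p - 1) / 4) / (1 - (p - 1) / 4))
  + (α * Real.sqrt 2 * M1 ^ ((1:ℝ)/4) * (Real.sqrt M2 * Real.sqrt M3))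
    * (8 * ((α * Real.sqrt 2 * M1 ^ ((1:ℝ)/4) * (Real.sqrt M2 * Real.sqrt M3)) + 1))
      ^ ((1:ℝ)/3)

end
noncomputable section

open MeasureTheory Filter Complex Real

lemma pot_piece {p : ℝ} (hp : 1 < p) {f : ℝ → ℂ} (hf : InH1 f) {M K : ℝ}
    (hm : massSq f ≤ M) (hk : kinetic f ≤ K) (hK : 0 ≤ K) :
    potential p f ≤ 2 ^ ((p - 1) / 2) * (M ^ ((p - 1) / 4) * M) * K ^ ((p - 1) / 4) := by
  have hm0 : 0 ≤ massSq f := massSq_nonneg f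
  have hk0 : 0 ≤ kinetic f := kinetic_nonneg f
  have hM0 : 0 ≤ M := hm0.trans hm
  have hθ : 0 ≤ (p - 1) / 2 := by linarith
  have step1 := potential_le hp.le hf
  have step2 : (2 * (Real.sqrt (massSq f) * Real.sqrt (kinetic f))) ^ ((p - 1) / 2)
      ≤ (2 * (Real.sqrt M * Real.sqrt K)) ^ ((p - 1) / 2) := by
    apply Real.rpow_le_rpow (by positivity) _ hθ
    have := mul_le_mul (Real.sqrt_le_sqrt hm) (Real.sqrt_le_sqrt hk)
      (Real.sqrt_nonneg _) (Real.sqrt_nonneg _)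
    linarith
  have step3 : (2 * (Real.sqrt M * Real.sqrt K)) ^ ((p - 1) / 2)
      = 2 ^ ((p - 1) / 2) * (M ^ ((p - 1) / 4) * K ^ ((p - 1) / 4)) := by
    rw [Real.mul_rpow (by norm_num) (by positivity),
      Real.mul_rpow (Real.sqrt_nonneg _) (Real.sqrt_nonneg _),
      sqrt_rpow' hM0, sqrt_rpow' hK]
    have he : (p - 1) / 2 / 2 = (p - 1) / 4 := by ring
    rw [he]
  calc potential p f
      ≤ (2 * (Real.sqrt (massSq f) * Real.sqrt (kinetic f))) ^ ((p - 1) / 2) * massSq f := step1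
    _ ≤ (2 * (Real.sqrt M * Real.sqrt K)) ^ ((p - 1) / 2) * M := by
        apply mul_le_mul step2 hm hm0 (by positivity)
    _ = 2 ^ ((p - 1) / 2) * (M ^ ((p - 1) / 4) * M) * K ^ ((p - 1) / 4) := by
        rw [step3]; ring

lemma tint_piece {u1 u2 u3 : ℝ → ℂ} (h1 : InH1 u1) (h2 : InH1 u2) (h3 : InH1 u3)
    {M1 M2 M3 K : ℝ} (hm1 : massSq u1 ≤ M1) (hm2 : massSq u2 ≤ M2)
    (hm3 : massSq u3 ≤ M3) (hk : kinetic u1 ≤ K) (hK : 0 ≤ K) :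
    Tint u1 u2 u3 ≤ Real.sqrt 2 * M1 ^ ((1:ℝ)/4) * (Real.sqrt M2 * Real.sqrt M3)
      * K ^ ((1:ℝ)/4) := by
  have hm10 : 0 ≤ massSq u1 := massSq_nonneg _
  have hM10 : 0 ≤ M1 := hm10.trans hm1
  have hk0 : 0 ≤ kinetic u1 := kinetic_nonneg _
  have step1 := Tint_le h1 h2 h3
  have step2 : Real.sqrt (2 * (Real.sqrt (massSq u1) * Real.sqrt (kinetic u1)))
      ≤ Real.sqrt 2 * M1 ^ ((1:ℝ)/4) * K ^ ((1:ℝ)/4) := by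
    have hin : 2 * (Real.sqrt (massSq u1) * Real.sqrt (kinetic u1))
        ≤ 2 * (Real.sqrt M1 * Real.sqrt K) := by
      have := mul_le_mul (Real.sqrt_le_sqrt hm1) (Real.sqrt_le_sqrt hk)
        (Real.sqrt_nonneg _) (Real.sqrt_nonneg _)
      linarith
    calc Real.sqrt (2 * (Real.sqrt (massSq u1) * Real.sqrt (kinetic u1)))
        ≤ Real.sqrt (2 * (Real.sqrt M1 * Real.sqrt K)) := Real.sqrt_le_sqrt hin
      _ = Real.sqrt 2 * M1 ^ ((1:ℝ)/4) * K ^ ((1:ℝ)/4) := by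
          rw [Real.sqrt_mul (by norm_num), Real.sqrt_mul (Real.sqrt_nonneg _),
            Real.sqrt_eq_rpow (Real.sqrt M1), Real.sqrt_eq_rpow (Real.sqrt K),
            sqrt_rpow' hM10, sqrt_rpow' hK]
          norm_num
          ring
  have step3 : Real.sqrt (massSq u2) * Real.sqrt (massSq u3)
      ≤ Real.sqrt M2 * Real.sqrt M3 :=
    mul_le_mul (Real.sqrt_le_sqrt hm2) (Real.sqrt_le_sqrt hm3)
      (Real.sqrt_nonneg _) (Real.sqrt_nonneg _)
  calc Tint u1 u2 u3 ≤ Real.sqrt (2 * (Real.sqrt (massSq u1) * Real.sqrt (kinetic u1)))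
        * (Real.sqrt (massSq u2) * Real.sqrt (massSq u3)) := step1
    _ ≤ (Real.sqrt 2 * M1 ^ ((1:ℝ)/4) * K ^ ((1:ℝ)/4)) * (Real.sqrt M2 * Real.sqrt M3) :=
        mul_le_mul step2 step3 (by positivity) (by positivity)
    _ = Real.sqrt 2 * M1 ^ ((1:ℝ)/4) * (Real.sqrt M2 * Real.sqrt M3) * K ^ ((1:ℝ)/4) := by
        ring

lemma energy_lower {p α β : ℝ} (hp : 1 < p) (hp5 : p < 5) (hα : 0 < α) (hβ : 0 < β)
    {u1 u2 u3 : ℝ → ℂ} (h1 : InH1 u1) (h2 : InH1 u2) (h3 : InH1 u3)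
    {M1 M2 M3 : ℝ} (hm1 : massSq u1 ≤ M1) (hm2 : massSq u2 ≤ M2)
    (hm3 : massSq u3 ≤ M3) :
    (kinetic u1 + kinetic u2 + kinetic u3) / 4 - Dconst p α β M1 M2 M3
      ≤ energy p α β u1 u2 u3 := by
  set K := kinetic u1 + kinetic u2 + kinetic u3 with hKdef
  have hk10 := kinetic_nonneg u1
  have hk20 := kinetic_nonneg u2
  have hk30 := kinetic_nonneg u3
  have hK0 : 0 ≤ K := by simp only [hKdef]; linarith
  have hM10 : 0 ≤ M1 := (massSq_nonneg u1).trans hm1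
  have hM20 : 0 ≤ M2 := (massSq_nonneg u2).trans hm2
  have hM30 : 0 ≤ M3 := (massSq_nonneg u3).trans hm3
  have hq10 : 0 < (p - 1) / 4 := by linarith
  have hq11 : (p - 1) / 4 < 1 := by linarith
  have hcβ : 0 < β / (p + 1) := div_pos hβ (by linarith)
  set Cpot := β / (p + 1) * (2:ℝ) ^ ((p - 1) / 2)
      * (M1 ^ ((p - 1) / 4) * M1 + M2 ^ ((p - 1) / 4) * M2 + M3 ^ ((p - 1) / 4) * M3)
    with hCpot
  set Cint := α * Real.sqrt 2 * M1 ^ ((1:ℝ)/4) * (Real.sqrt M2 * Real.sqrt M3) with hCint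
  have hCpot0 : 0 ≤ Cpot := by
    rw [hCpot]; positivity
  have hCint0 : 0 ≤ Cint := by rw [hCint]; positivity
  -- potential bound
  have hpotsum : β / (p + 1) * (potential p u1 + potential p u2 + potential p u3)
      ≤ Cpot * K ^ ((p - 1) / 4) := by
    have b1 := pot_piece hp h1 hm1 (by linarith : kinetic u1 ≤ K) hK0
    have b2 := pot_piece hp h2 hm2 (by linarith : kinetic u2 ≤ K) hK0
    have b3 := pot_piece hp h3 hm3 (by linarith : kinetic u3 ≤ K) hK0
    have hsum : potential p u1 + potential p u2 + potential p u3
        ≤ 2 ^ ((p - 1) / 2) * (M1 ^ ((p - 1) / 4) * M1 + M2 ^ ((p - 1) / 4) * M2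
          + M3 ^ ((p - 1) / 4) * M3) * K ^ ((p - 1) / 4) := by nlinarith [b1, b2, b3]
    calc β / (p + 1) * (potential p u1 + potential p u2 + potential p u3)
        ≤ β / (p + 1) * (2 ^ ((p - 1) / 2) * (M1 ^ ((p - 1) / 4) * M1
            + M2 ^ ((p - 1) / 4) * M2 + M3 ^ ((p - 1) / 4) * M3) * K ^ ((p - 1) / 4)) :=
          mul_le_mul_of_nonneg_left hsum hcβ.le
      _ = Cpot * K ^ ((p - 1) / 4) := by rw [hCpot]; ring
  -- interaction bound
  have hint : α * |interaction u1 u2 u3| ≤ Cint * K ^ ((1:ℝ)/4) := by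
    have b := (abs_interaction_le h1 h2 h3).trans
      (tint_piece h1 h2 h3 hm1 hm2 hm3 (by linarith : kinetic u1 ≤ K) hK0)
    calc α * |interaction u1 u2 u3|
        ≤ α * (Real.sqrt 2 * M1 ^ ((1:ℝ)/4) * (Real.sqrt M2 * Real.sqrt M3)
          * K ^ ((1:ℝ)/4)) := mul_le_mul_of_nonneg_left b hα.le
      _ = Cint * K ^ ((1:ℝ)/4) := by rw [hCint]; ring
  have habs1 : Cpot * K ^ ((p - 1) / 4)
      ≤ K / 8 + Cpot * (8 * (Cpot + 1)) ^ (((p - 1) / 4) / (1 - (p - 1) / 4)) :=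
    absorb hCpot0 hq10 hq11 hK0
  have habs2 : Cint * K ^ ((1:ℝ)/4) ≤ K / 8 + Cint * (8 * (Cint + 1)) ^ ((1:ℝ)/3) := by
    have h := absorb hCint0 (by norm_num : (0:ℝ) < 1/4) (by norm_num : (1:ℝ)/4 < 1) hK0
    have he : ((1:ℝ)/4) / (1 - (1:ℝ)/4) = (1:ℝ)/3 := by norm_num
    rw [he] at h
    exact h
  have hD : Dconst p α β M1 M2 M3
      = Cpot * (8 * (Cpot + 1)) ^ (((p - 1) / 4) / (1 - (p - 1) / 4))
        + Cint * (8 * (Cint + 1)) ^ ((1:ℝ)/3) := by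
    rw [Dconst, hCpot, hCint]
  have hinter : - (α * interaction u1 u2 u3) ≥ - (α * |interaction u1 u2 u3|) := by
    have := le_abs_self (interaction u1 u2 u3)
    nlinarith [hα.le]
  rw [energy]
  have expand : (1 / 2) * kinetic u1 - β / (p + 1) * potential p u1
      + ((1 / 2) * kinetic u2 - β / (p + 1) * potential p u2)
      + ((1 / 2) * kinetic u3 - β / (p + 1) * potential p u3)
      - α * interaction u1 u2 u3
      = K / 2 - β / (p + 1) * (potential p u1 + potential p u2 + potential p u3)
        - α * interaction u1 u2 u3 := by
    rw [hKdef]; ring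
  rw [expand, hD]
  linarith [hpotsum, hint, habs1, habs2, hinter]

lemma Dconst_nonneg {p α β M1 M2 M3 : ℝ} (hp : 1 < p) (hα : 0 < α) (hβ : 0 < β)
    (hM1 : 0 ≤ M1) (hM2 : 0 ≤ M2) (hM3 : 0 ≤ M3) :
    0 ≤ Dconst p α β M1 M2 M3 := by
  have hcβ : 0 ≤ β / (p + 1) := le_of_lt (div_pos hβ (by linarith))
  rw [Dconst]
  positivity

end
noncomputable section

open MeasureTheory Filter Complex Real

/-- real Gaussian profile -/
def gaussF (c l : ℝ) : ℝ → ℝ := fun x => c * Real.exp (-(l*x)^2)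

/-- complex Gaussian profile -/
def gaussC (c l : ℝ) : ℝ → ℂ := fun x => ((gaussF c l x : ℝ) : ℂ)

/-- derivative of the Gaussian -/
def gaussD (c l : ℝ) : ℝ → ℝ := fun x => c * (-(2*(l*x)*l)) * Real.exp (-(l*x)^2)

lemma gaussF_hasDerivAt (c l x : ℝ) :
    HasDerivAt (gaussF c l) (gaussD c l x) x := by
  have h1 : HasDerivAt (fun x : ℝ => l * x) l x := by
    simpa using (hasDerivAt_id x).const_mul l
  have h3 : HasDerivAt (fun x : ℝ => -(l*x)^2) (-(2*(l*x)^1*l)) x := (h1.pow 2).neg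
  have h5 : HasDerivAt (fun x : ℝ => c * Real.exp (-(l*x)^2))
      (c * (Real.exp (-(l*x)^2) * -(2*(l*x)^1*l))) x := (h3.exp).const_mul c
  have heq : gaussF c l = fun x : ℝ => c * Real.exp (-(l*x)^2) := rfl
  rw [heq]
  convert h5 using 1
  unfold gaussD; ring

lemma gaussC_hasDerivAt (c l x : ℝ) :
    HasDerivAt (gaussC c l) ((gaussD c l x : ℝ) : ℂ) x :=
  (gaussF_hasDerivAt c l x).ofReal_comp

lemma gaussC_differentiable (c l : ℝ) : Differentiable ℝ (gaussC c l) :=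
  fun x => (gaussC_hasDerivAt c l x).differentiableAt

lemma gaussC_deriv (c l : ℝ) :
    deriv (gaussC c l) = fun x => ((gaussD c l x : ℝ) : ℂ) := by
  funext x; exact (gaussC_hasDerivAt c l x).deriv

lemma gaussC_norm (c l x : ℝ) (hc : 0 ≤ c) : ‖gaussC c l x‖ = gaussF c l x := by
  rw [gaussC, Complex.norm_real, Real.norm_eq_abs]
  exact abs_of_nonneg (by unfold gaussF; positivity)

lemma gaussC_inH1 (c : ℝ) {l : ℝ} (hl : 0 < l) : InH1 (gaussC c l) := by
  have hl2 : (0:ℝ) < l^2 := by positivity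
  have hcont : Continuous (gaussC c l) := (gaussC_differentiable c l).continuous
  refine ⟨?_, gaussC_differentiable c l, ?_⟩
  · rw [memLp_two_iff_integrable_sq_norm hcont.aestronglyMeasurable]
    have hint : Integrable (fun x : ℝ => c^2 * Real.exp (-(2*l^2) * x^2)) volume :=
      (integrable_exp_neg_mul_sq (by positivity : (0:ℝ) < 2*l^2)).const_mul _
    refine hint.congr (ae_of_all _ fun x => ?_)
    simp only [gaussC, Complex.norm_real, Real.norm_eq_abs, _root_.sq_abs, gaussF]
    rw [mul_pow, pow_two (Real.exp _), ← Real.exp_add]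
    congr 2
    ring
  · rw [gaussC_deriv]
    have hcontD : Continuous (gaussD c l) := by
      unfold gaussD; fun_prop
    have hcont2 : Continuous fun x => ((gaussD c l x : ℝ) : ℂ) :=
      Complex.continuous_ofReal.comp hcontD
    rw [memLp_two_iff_integrable_sq_norm hcont2.aestronglyMeasurable]
    have hint : Integrable (fun x : ℝ => (4*c^2*l^2) * Real.exp (-l^2 * x^2)) volume :=
      (integrable_exp_neg_mul_sq hl2).const_mul _
    refine Integrable.mono' hint
      (hcont2.norm.pow 2).aestronglyMeasurable (ae_of_all _ fun x => ?_)
    rw [Real.norm_eq_abs, _root_.abs_of_nonneg (sq_nonneg _)]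
    simp only [Complex.norm_real, Real.norm_eq_abs, _root_.sq_abs, gaussD]
    have key : (l*x)^2 * Real.exp (-(l*x)^2) ≤ 1 := by
      have h := Real.add_one_le_exp ((l*x)^2)
      have hexp : 0 < Real.exp ((l*x)^2) := Real.exp_pos _
      rw [Real.exp_neg]
      rw [mul_inv_le_iff₀ hexp, one_mul]
      linarith
    have expand : (c * (-(2*(l*x)*l)) * Real.exp (-(l*x)^2))^2
        = (4*c^2*l^2) * (((l*x)^2 * Real.exp (-(l*x)^2)) * Real.exp (-(l*x)^2)) := by
      ring
    rw [expand]
    have hee : Real.exp (-(l*x)^2) ≤ Real.exp (-l^2 * x^2) := by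
      apply le_of_eq; congr 1; ring
    have h1 : ((l*x)^2 * Real.exp (-(l*x)^2)) * Real.exp (-(l*x)^2)
        ≤ 1 * Real.exp (-l^2 * x^2) := by
      apply mul_le_mul key hee (Real.exp_pos _).le zero_le_one
    calc (4*c^2*l^2) * (((l*x)^2 * Real.exp (-(l*x)^2)) * Real.exp (-(l*x)^2))
        ≤ (4*c^2*l^2) * (1 * Real.exp (-l^2 * x^2)) :=
          mul_le_mul_of_nonneg_left h1 (by positivity)
      _ = (4*c^2*l^2) * Real.exp (-l^2 * x^2) := by ring

lemma gaussC_massSq (c : ℝ) {l : ℝ} (hl : 0 < l) :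
    massSq (gaussC c l) = c^2 * Real.sqrt (Real.pi / (2*l^2)) := by
  rw [massSq]
  have : (fun x : ℝ => ‖gaussC c l x‖^2) = fun x => c^2 * Real.exp (-(2*l^2) * x^2) := by
    funext x
    simp only [gaussC, Complex.norm_real, Real.norm_eq_abs, _root_.sq_abs, gaussF]
    rw [mul_pow, pow_two (Real.exp _), ← Real.exp_add]
    congr 2
    ring
  rw [this, integral_const_mul, integral_gaussian]

lemma gaussC_tendsto (c : ℝ) {l : ℝ} (hl : 0 < l) :
    Tendsto (gaussC c l) atBot (nhds 0) := by
  have hlx : Tendsto (fun x : ℝ => l * x) atBot atBot :=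
    Tendsto.const_mul_atBot hl tendsto_id
  have hneg : Tendsto (fun x : ℝ => -(l * x)) atBot atTop :=
    tendsto_neg_atBot_atTop.comp hlx
  have hsq : Tendsto (fun x : ℝ => (-(l*x))^2) atBot atTop :=
    (tendsto_pow_atTop two_ne_zero).comp hneg
  have hsq' : Tendsto (fun x : ℝ => (l*x)^2) atBot atTop := by
    refine hsq.congr fun x => ?_
    rw [neg_sq]
  have hnsq : Tendsto (fun x : ℝ => -(l*x)^2) atBot atBot :=
    tendsto_neg_atTop_atBot.comp hsq'
  have hexp : Tendsto (fun x : ℝ => Real.exp (-(l*x)^2)) atBot (nhds 0) :=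
    Real.tendsto_exp_atBot.comp hnsq
  have hF : Tendsto (gaussF c l) atBot (nhds 0) := by
    have := hexp.const_mul c
    rw [mul_zero] at this
    exact this
  have := (Complex.continuous_ofReal.tendsto 0).comp hF
  exact this

lemma gaussC_potential {p : ℝ} (hp : 1 < p) {c l : ℝ} (hc : 0 ≤ c) (hl : 0 < l) :
    potential p (gaussC c l) = c ^ (p+1) * Real.sqrt (Real.pi / ((p+1)*l^2)) := by
  rw [potential]
  have hpt : (fun x : ℝ => ‖gaussC c l x‖ ^ (p+1))
      = fun x => c ^ (p+1) * Real.exp (-((p+1)*l^2) * x^2) := by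
    funext x
    rw [gaussC_norm c l x hc, gaussF, Real.mul_rpow hc (Real.exp_pos _).le]
    congr 1
    rw [Real.rpow_def_of_pos (Real.exp_pos _), Real.log_exp]
    congr 1
    ring
  rw [hpt, integral_const_mul, integral_gaussian]

lemma gaussC_kinetic_le (c : ℝ) {l : ℝ} (hl : 0 < l) :
    kinetic (gaussC c l) ≤ 4*c^2*l*Real.sqrt Real.pi := by
  rw [kinetic, gaussC_deriv]
  have key : ∀ x : ℝ, ‖((gaussD c l x : ℝ) : ℂ)‖^2
      ≤ (4*c^2*l^2) * Real.exp (-l^2 * x^2) := by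
    intro x
    simp only [Complex.norm_real, Real.norm_eq_abs, _root_.sq_abs, gaussD]
    have key : (l*x)^2 * Real.exp (-(l*x)^2) ≤ 1 := by
      have h := Real.add_one_le_exp ((l*x)^2)
      have hexp : 0 < Real.exp ((l*x)^2) := Real.exp_pos _
      rw [Real.exp_neg, mul_inv_le_iff₀ hexp, one_mul]
      linarith
    have expand : (c * (-(2*(l*x)*l)) * Real.exp (-(l*x)^2))^2
        = (4*c^2*l^2) * (((l*x)^2 * Real.exp (-(l*x)^2)) * Real.exp (-(l*x)^2)) := by
      ring
    rw [expand]
    have hee : Real.exp (-(l*x)^2) ≤ Real.exp (-l^2 * x^2) := by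
      apply le_of_eq; congr 1; ring
    have h1 : ((l*x)^2 * Real.exp (-(l*x)^2)) * Real.exp (-(l*x)^2)
        ≤ 1 * Real.exp (-l^2 * x^2) :=
      mul_le_mul key hee (Real.exp_pos _).le zero_le_one
    nlinarith [sq_nonneg c, sq_nonneg l, h1, mul_le_mul_of_nonneg_left h1
      (by positivity : (0:ℝ) ≤ 4*c^2*l^2)]
  have hint : Integrable (fun x : ℝ => (4*c^2*l^2) * Real.exp (-l^2 * x^2)) volume :=
    (integrable_exp_neg_mul_sq (by positivity)).const_mul _
  calc ∫ x, ‖((gaussD c l x : ℝ) : ℂ)‖^2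
      ≤ ∫ x, (4*c^2*l^2) * Real.exp (-l^2 * x^2) :=
        integral_mono_of_nonneg (ae_of_all _ fun x => sq_nonneg _) hint
          (ae_of_all _ fun x => key x)
    _ = (4*c^2*l^2) * Real.sqrt (Real.pi / l^2) := by
        rw [integral_const_mul, integral_gaussian]
    _ = 4*c^2*l*Real.sqrt Real.pi := by
        rw [Real.sqrt_div Real.pi_nonneg, Real.sqrt_sq hl.le]
        field_simp

end
noncomputable section

open MeasureTheory Filter Complex Real

lemma sqrt_pi_half_pos : 0 < Real.sqrt (Real.pi / 2) :=
  Real.sqrt_pos.mpr (div_pos Real.pi_pos two_pos)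

lemma exists_massSq {t : ℝ} (ht : 0 ≤ t) : ∃ f : ℝ → ℂ, InH1 f ∧ massSq f = t := by
  set c := Real.sqrt (t / Real.sqrt (Real.pi / 2)) with hc
  refine ⟨gaussC c 1, gaussC_inH1 c one_pos, ?_⟩
  rw [gaussC_massSq c one_pos]
  have h1 : (2 * (1:ℝ)^2) = 2 := by norm_num
  rw [h1]
  have hc2 : c^2 = t / Real.sqrt (Real.pi / 2) :=
    Real.sq_sqrt (div_nonneg ht sqrt_pi_half_pos.le)
  rw [hc2]
  field_simp

lemma bump_exists {p β : ℝ} (hp : 1 < p) (hp5 : p < 5) (hβ : 0 < β) {t : ℝ}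
    (ht : 0 < t) :
    ∃ w : ℝ → ℂ, InH1 w ∧ massSq w = t ∧ Tendsto w atBot (nhds 0) ∧
      1/2 * kinetic w - β/(p+1) * potential p w < 0 := by
  have hπ := Real.pi_pos
  have hπ2 : (0:ℝ) < Real.sqrt (Real.pi / 2) := sqrt_pi_half_pos
  have htr : 0 < t / Real.sqrt (Real.pi / 2) := div_pos ht hπ2
  set A := 2 * Real.sqrt Real.pi * (t / Real.sqrt (Real.pi/2)) with hA
  set B := β/(p+1) * Real.sqrt (Real.pi/(p+1))
      * (t / Real.sqrt (Real.pi/2)) ^ ((p+1)/2) with hB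
  have hsπ : 0 < Real.sqrt Real.pi := Real.sqrt_pos.mpr hπ
  have hA0 : 0 < A := by rw [hA]; positivity
  have hB0 : 0 < B := by
    rw [hB]
    have h1 : 0 < β/(p+1) := div_pos hβ (by linarith)
    have h2 : 0 < Real.sqrt (Real.pi/(p+1)) :=
      Real.sqrt_pos.mpr (div_pos Real.pi_pos (by linarith))
    have h3 : 0 < (t / Real.sqrt (Real.pi/2)) ^ ((p+1)/2) :=
      Real.rpow_pos_of_pos htr _
    positivity
  set q := (p-1)/2 with hq
  have hq2 : 0 < 2 - q := by rw [hq]; linarith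
  obtain ⟨l, hl0, hl1, hlP⟩ := exists_small_rpow hA0.le hq2 (half_pos hB0)
  set c := Real.sqrt (t * l / Real.sqrt (Real.pi/2)) with hc
  have hc2 : c^2 = t * l / Real.sqrt (Real.pi/2) :=
    Real.sq_sqrt (by positivity)
  have hc0 : 0 ≤ c := Real.sqrt_nonneg _
  refine ⟨gaussC c l, gaussC_inH1 c hl0, ?_, gaussC_tendsto c hl0, ?_⟩
  · -- mass
    rw [gaussC_massSq c hl0]
    have h1 : Real.pi / (2*l^2) = (Real.pi/2) / l^2 := by ring
    rw [h1, Real.sqrt_div (by positivity : (0:ℝ) ≤ Real.pi/2), Real.sqrt_sq hl0.le,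
      hc2]
    field_simp
  · -- energy negativity
    have hkin := gaussC_kinetic_le c hl0
    have hpot := gaussC_potential hp hc0 hl0
    have step1 : 1/2 * kinetic (gaussC c l) ≤ A * l^(2:ℝ) := by
      have h2 : 2*c^2*l*Real.sqrt Real.pi = A * l^2 := by
        rw [hc2, hA]; field_simp
      rw [Real.rpow_two]
      calc 1/2 * kinetic (gaussC c l) ≤ 1/2 * (4*c^2*l*Real.sqrt Real.pi) := by
            linarith
        _ = 2*c^2*l*Real.sqrt Real.pi := by ring
        _ = A * l^2 := h2
    have step2 : β/(p+1) * potential p (gaussC c l) = B * l ^ q := by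
      rw [hpot]
      have e0 : Real.pi/((p+1)*l^2) = (Real.pi/(p+1))/l^2 := (div_div Real.pi (p+1) (l^2)).symm
      have e1 : Real.sqrt (Real.pi/((p+1)*l^2)) = Real.sqrt (Real.pi/(p+1)) / l := by
        rw [e0, Real.sqrt_div (by positivity : (0:ℝ) ≤ Real.pi/(p+1)),
          Real.sqrt_sq hl0.le]
      have e2 : c ^ (p+1) = (t / Real.sqrt (Real.pi/2)) ^ ((p+1)/2) * l ^ ((p+1)/2) := by
        have e21 : c ^ (p+1) = (c^2) ^ ((p+1)/2) := by
          rw [← Real.rpow_natCast c 2, ← Real.rpow_mul hc0]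
          congr 1
          push_cast
          ring
        rw [e21, hc2]
        have e22 : t * l / Real.sqrt (Real.pi/2) = (t / Real.sqrt (Real.pi/2)) * l := by
          ring
        rw [e22, Real.mul_rpow htr.le hl0.le]
      rw [e1, e2, hB]
      have e3 : l ^ ((p+1)/2) / l = l ^ q := by
        nth_rewrite 2 [← Real.rpow_one l]
        rw [← Real.rpow_sub hl0, hq]
        congr 1
        ring
      field_simp
      rw [← e3]
      field_simp
    have step3 : A * l^(2:ℝ) < B * l ^ q := by
      have hlq : 0 < l ^ q := Real.rpow_pos_of_pos hl0 _
      have e4 : (A * l^(2-q)) * l^q = A * l^(2:ℝ) := by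
        rw [mul_assoc, ← Real.rpow_add hl0]
        congr 2
        ring
      have h5 := hlP l hl0.le le_rfl
      rw [← e4]
      have h6 : (A * l^(2-q)) * l^q ≤ (B/2) * l^q :=
        mul_le_mul_of_nonneg_right h5 hlq.le
      have h7 : (B/2) * l^q < B * l^q := by
        apply mul_lt_mul_of_pos_right _ hlq
        linarith
      linarith
    linarith [step1, step2, step3]

lemma constraint_nonempty {p α β γ μ s : ℝ} (hγ : 0 ≤ γ) (hμ : 0 ≤ μ) (hs : 0 ≤ s) :
    (constraintSet p α β γ μ s).Nonempty := by
  obtain ⟨f1, hf1, hm1⟩ := exists_massSq hγ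
  obtain ⟨f2, hf2, hm2⟩ := exists_massSq hμ
  obtain ⟨f3, hf3, hm3⟩ := exists_massSq hs
  exact ⟨energy p α β f1 f2 f3, f1, f2, f3, hf1, hf2, hf3, hm1, hm2, hm3, rfl⟩

lemma constraint_bddBelow {p α β γ μ s : ℝ} (hp : 1 < p) (hp5 : p < 5)
    (hα : 0 < α) (hβ : 0 < β) :
    BddBelow (constraintSet p α β γ μ s) := by
  refine ⟨-(Dconst p α β γ μ s), fun e he => ?_⟩
  obtain ⟨u1, u2, u3, h1, h2, h3, hm1, hm2, hm3, hE⟩ := he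
  have := energy_lower hp hp5 hα hβ h1 h2 h3 hm1.le hm2.le hm3.le
  have hk := kinetic_nonneg u1
  have hk2 := kinetic_nonneg u2
  have hk3 := kinetic_nonneg u3
  rw [hE]
  linarith

lemma Iinf_le_of_mem {p α β γ μ s e : ℝ} (hp : 1 < p) (hp5 : p < 5)
    (hα : 0 < α) (hβ : 0 < β) (he : e ∈ constraintSet p α β γ μ s) :
    Iinf p α β γ μ s ≤ e :=
  csInf_le (constraint_bddBelow hp hp5 hα hβ) he

end
noncomputable section

open MeasureTheory Filter Complex Real

lemma deriv_translate {f : ℝ → ℂ} (hf : Differentiable ℝ f) (R : ℝ) :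
    deriv (fun x => f (x - R)) = fun x => deriv f (x - R) := by
  funext x
  exact deriv_comp_sub_const (f := f) (a := R) (x := x)

lemma InH1.translate {f : ℝ → ℂ} (hf : InH1 f) (R : ℝ) :
    InH1 (fun x => f (x - R)) := by
  have hmp : MeasurePreserving (fun x : ℝ => x - R) volume volume :=
    measurePreserving_sub_right volume R
  refine ⟨?_, fun x => (hf.2.1 (x - R)).comp x (differentiable_id.sub_const R x), ?_⟩
  · have := hf.1.comp_measurePreserving hmp
    simpa [Function.comp_def] using this
  · rw [deriv_translate hf.2.1 R]
    have := hf.2.2.comp_measurePreserving hmp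
    simpa [Function.comp_def] using this

lemma massSq_translate (f : ℝ → ℂ) (R : ℝ) :
    massSq (fun x => f (x - R)) = massSq f :=
  integral_sub_right_eq_self (fun x => ‖f x‖ ^ 2) R

lemma kinetic_translate {f : ℝ → ℂ} (hf : Differentiable ℝ f) (R : ℝ) :
    kinetic (fun x => f (x - R)) = kinetic f := by
  rw [kinetic, deriv_translate hf R]
  exact integral_sub_right_eq_self (fun x => ‖deriv f x‖ ^ 2) R

lemma potential_translate (p : ℝ) (f : ℝ → ℂ) (R : ℝ) :
    potential p (fun x => f (x - R)) = potential p f :=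
  integral_sub_right_eq_self (fun x => ‖f x‖ ^ (p + 1)) R

lemma deriv_smulC {f : ℝ → ℂ} (hf : Differentiable ℝ f) (c : ℝ) :
    deriv (fun x => (c : ℂ) * f x) = fun x => (c : ℂ) * deriv f x := by
  funext x
  exact deriv_const_mul _ (hf x)

lemma InH1.smulC {f : ℝ → ℂ} (hf : InH1 f) (c : ℝ) :
    InH1 (fun x => (c : ℂ) * f x) := by
  refine ⟨hf.1.const_mul _, hf.2.1.const_mul _, ?_⟩
  rw [deriv_smulC hf.2.1 c]
  exact hf.2.2.const_mul _

lemma massSq_smulC (f : ℝ → ℂ) {c : ℝ} (hc : 0 ≤ c) :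
    massSq (fun x => (c : ℂ) * f x) = c ^ 2 * massSq f := by
  rw [massSq, massSq, ← integral_const_mul]
  congr 1
  funext x
  rw [norm_mul, Complex.norm_real, Real.norm_eq_abs, _root_.abs_of_nonneg hc]
  ring

lemma kinetic_smulC {f : ℝ → ℂ} (hf : Differentiable ℝ f) {c : ℝ} (hc : 0 ≤ c) :
    kinetic (fun x => (c : ℂ) * f x) = c ^ 2 * kinetic f := by
  rw [kinetic, deriv_smulC hf c, kinetic, ← integral_const_mul]
  congr 1
  funext x
  rw [norm_mul, Complex.norm_real, Real.norm_eq_abs, _root_.abs_of_nonneg hc]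
  ring

lemma potential_smulC (p : ℝ) (f : ℝ → ℂ) {c : ℝ} (hc : 0 ≤ c) :
    potential p (fun x => (c : ℂ) * f x) = c ^ (p + 1) * potential p f := by
  rw [potential, potential, ← integral_const_mul]
  congr 1
  funext x
  rw [norm_mul, Complex.norm_real, Real.norm_eq_abs, _root_.abs_of_nonneg hc,
    Real.mul_rpow hc (norm_nonneg _)]

lemma InH1.zero : InH1 (fun _ : ℝ => (0 : ℂ)) := by
  refine ⟨?_, differentiable_const 0, ?_⟩
  · simpa using (zero_memLp : MemLp (0 : ℝ → ℂ) 2 volume)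
  · rw [deriv_const']
    simpa using (zero_memLp : MemLp (0 : ℝ → ℂ) 2 volume)

lemma massSq_zero : massSq (fun _ : ℝ => (0 : ℂ)) = 0 := by
  rw [massSq]; simp

lemma kinetic_zero : kinetic (fun _ : ℝ => (0 : ℂ)) = 0 := by
  rw [kinetic, deriv_const']; simp

lemma potential_zero {p : ℝ} (hp : 1 < p) : potential p (fun _ : ℝ => (0 : ℂ)) = 0 := by
  rw [potential]
  have : ∀ x : ℝ, ‖(0:ℂ)‖ ^ (p+1) = (0:ℝ) := by
    intro x
    rw [norm_zero, Real.zero_rpow (by linarith : p + 1 ≠ 0)]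
  simp [this, Real.zero_rpow (by linarith : p + 1 ≠ 0)]

end
noncomputable section

open MeasureTheory Filter Complex Real

lemma exists_translate_small {w v2 v3 : ℝ → ℂ} (hw : InH1 w)
    (hwdec : Tendsto w atBot (nhds 0)) (hv2 : InH1 v2) (hv3 : InH1 v3)
    {ζ : ℝ} (hζ : 0 < ζ) :
    ∃ R : ℝ, Tint (fun x => w (x - R)) v2 v3 ≤ ζ := by
  set Cw := Real.sqrt (2 * (Real.sqrt (massSq w) * Real.sqrt (kinetic w))) with hCw
  have hCw0 : 0 ≤ Cw := Real.sqrt_nonneg _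
  have key : Tendsto (fun n : ℕ => Tint (fun x => w (x - (n:ℝ))) v2 v3) atTop
      (nhds 0) := by
    have h0 : (0:ℝ) = ∫ _ : ℝ, (0:ℝ) := by simp
    rw [h0]
    refine tendsto_integral_filter_of_dominated_convergence
      (fun x => Cw * (‖v2 x‖ * ‖v3 x‖)) ?_ ?_ ?_ ?_
    · refine Eventually.of_forall fun n => ?_
      have hc : Continuous fun x => ‖w (x - (n:ℝ))‖ * ‖v2 x‖ * ‖v3 x‖ :=
        (((hw.cont.comp (continuous_id.sub continuous_const)).norm.mul
          hv2.cont.norm).mul hv3.cont.norm)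
      exact hc.aestronglyMeasurable
    · refine Eventually.of_forall fun n => ae_of_all _ fun x => ?_
      rw [Real.norm_eq_abs, _root_.abs_of_nonneg (by positivity)]
      have h1 : ‖w (x - (n:ℝ))‖ ≤ Cw := hw.norm_le _
      calc ‖w (x - (n:ℝ))‖ * ‖v2 x‖ * ‖v3 x‖
          = ‖w (x - (n:ℝ))‖ * (‖v2 x‖ * ‖v3 x‖) := by ring
        _ ≤ Cw * (‖v2 x‖ * ‖v3 x‖) :=
            mul_le_mul_of_nonneg_right h1 (by positivity)
    · exact (prod_norm_integrable hv2 hv3).const_mul Cw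
    · refine ae_of_all _ fun x => ?_
      have hx : Tendsto (fun n : ℕ => x - (n:ℝ)) atTop atBot := by
        have h1 : Tendsto (fun n : ℕ => (n:ℝ)) atTop atTop :=
          tendsto_natCast_atTop_atTop
        have h2 : Tendsto (fun n : ℕ => -(n:ℝ)) atTop atBot :=
          tendsto_neg_atTop_atBot.comp h1
        have h3 := tendsto_atBot_add_const_left atTop x h2
        refine h3.congr fun n => ?_
        ring
      have hwx : Tendsto (fun n : ℕ => w (x - (n:ℝ))) atTop (nhds 0) :=
        hwdec.comp hx
      have hnorm : Tendsto (fun n : ℕ => ‖w (x - (n:ℝ))‖) atTop (nhds 0) := by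
        have := (continuous_norm.tendsto (0:ℂ)).comp hwx
        simpa [Function.comp_def] using this
      have := (hnorm.mul_const ‖v2 x‖).mul_const ‖v3 x‖
      simpa using this
  have hev := key.eventually (eventually_le_nhds (show (0:ℝ) < ζ from hζ))
  obtain ⟨n, hn⟩ := hev.exists
  exact ⟨(n : ℝ), hn⟩

end
noncomputable section

open MeasureTheory Filter Complex Real

/-- single-component energy -/
def sgl (p β : ℝ) (f : ℝ → ℂ) : ℝ := 1/2 * kinetic f - β/(p+1) * potential p f

lemma energy_eq_sgl (p α β : ℝ) (u1 u2 u3 : ℝ → ℂ) :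
    energy p α β u1 u2 u3
      = sgl p β u1 + sgl p β u2 + sgl p β u3 - α * interaction u1 u2 u3 := rfl

lemma sgl_zero {p β : ℝ} (hp : 1 < p) : sgl p β (fun _ : ℝ => (0:ℂ)) = 0 := by
  rw [sgl, kinetic_zero, potential_zero hp]
  ring

lemma sgl_translate {p β : ℝ} {f : ℝ → ℂ} (hf : InH1 f) (R : ℝ) :
    sgl p β (fun x => f (x - R)) = sgl p β f := by
  rw [sgl, sgl, kinetic_translate hf.2.1 R, potential_translate p f R]

lemma normalizeT {p β : ℝ} (hp : 1 < p) (hβ : 0 < β) {v : ℝ → ℂ} (hv : InH1 v)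
    {t ζ : ℝ} (ht : 0 ≤ t) (hζ : 0 < ζ)
    (hcase : (t = 0 ∧ β/(p+1) * potential p v ≤ ζ) ∨
      (0 < massSq v ∧ |t/massSq v - 1| * kinetic v ≤ ζ/2 ∧
        β/(p+1) * (|(t/massSq v)^((p+1)/2) - 1| * potential p v) ≤ ζ/2)) :
    ∃ vh, InH1 vh ∧ massSq vh = t ∧ sgl p β vh ≤ sgl p β v + ζ := by
  have hcβ : 0 < β/(p+1) := div_pos hβ (by linarith)
  rcases hcase with ⟨ht0, hpot⟩ | ⟨hm, h1, h2⟩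
  · refine ⟨fun _ => 0, InH1.zero, ?_, ?_⟩
    · rw [massSq_zero, ht0]
    · rw [sgl_zero hp, sgl]
      have := kinetic_nonneg v
      linarith
  · set m := massSq v with hmdef
    set r := t / m with hrdef
    have hr0 : 0 ≤ r := div_nonneg ht hm.le
    set c := Real.sqrt r with hcdef
    have hc0 : 0 ≤ c := Real.sqrt_nonneg _
    have hc2 : c^2 = r := Real.sq_sqrt hr0
    refine ⟨fun x => (c : ℂ) * v x, hv.smulC c, ?_, ?_⟩
    · rw [massSq_smulC v hc0, hc2, hrdef]
      field_simp
      rfl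
    · have hkin : kinetic (fun x => (c:ℂ) * v x) = r * kinetic v := by
        rw [kinetic_smulC hv.2.1 hc0, hc2]
      have hpoteq : potential p (fun x => (c:ℂ) * v x)
          = r^((p+1)/2) * potential p v := by
        rw [potential_smulC p v hc0]
        congr 1
        rw [← hc2, ← Real.rpow_natCast c 2, ← Real.rpow_mul hc0]
        congr 1
        push_cast
        ring
      rw [sgl, sgl, hkin, hpoteq]
      have e1 : (r - 1) * kinetic v ≤ |r - 1| * kinetic v :=
        mul_le_mul_of_nonneg_right (le_abs_self _) (kinetic_nonneg v)
      have e2 : (1 - r^((p+1)/2)) * potential p v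
          ≤ |r^((p+1)/2) - 1| * potential p v := by
        refine mul_le_mul_of_nonneg_right ?_ (potential_nonneg p v)
        rw [abs_sub_comm]
        exact le_abs_self _
      have e3 : β/(p+1) * ((1 - r^((p+1)/2)) * potential p v) ≤ ζ/2 :=
        le_trans (mul_le_mul_of_nonneg_left e2 hcβ.le) h2
      have e4 : (r - 1) * kinetic v ≤ ζ/2 := le_trans e1 h1
      nlinarith [e3, e4, kinetic_nonneg v]

lemma eventually_normalizeT {p β B0 : ℝ} (hp : 1 < p) (hp5 : p < 5) (hβ : 0 < β)
    (hB0 : 0 ≤ B0) {V : ℕ → ℝ → ℂ} (hV : ∀ n, InH1 (V n)) {t : ℝ} (ht : 0 ≤ t)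
    (hm : Tendsto (fun n => massSq (V n)) atTop (nhds t))
    (hK : ∀ᶠ n in atTop, kinetic (V n) ≤ B0)
    {ζ : ℝ} (hζ : 0 < ζ) :
    ∀ᶠ n in atTop, ∃ vh, InH1 vh ∧ massSq vh = t ∧
      sgl p β vh ≤ sgl p β (V n) + ζ := by
  have hcβ : 0 < β/(p+1) := div_pos hβ (by linarith)
  have hq1 : (0:ℝ) < (p-1)/4 := by linarith
  rcases eq_or_lt_of_le ht with ht0 | ht0
  · -- t = 0
    have hlim : Tendsto (fun n => β/(p+1) * (2 ^ ((p-1)/2)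
        * ((massSq (V n)) ^ ((p-1)/4) * massSq (V n)) * B0 ^ ((p-1)/4)))
        atTop (nhds 0) := by
      rw [← ht0] at hm
      have hrp : Tendsto (fun n => (massSq (V n)) ^ ((p-1)/4)) atTop (nhds 0) := by
        have hco : ContinuousAt (fun x : ℝ => x ^ ((p-1)/4)) 0 :=
          Real.continuousAt_rpow_const 0 _ (Or.inr hq1.le)
        have := hco.tendsto.comp hm
        simpa [Real.zero_rpow (ne_of_gt hq1), Function.comp_def] using this
      have := ((hrp.mul hm).const_mul ((2:ℝ) ^ ((p-1)/2))).mul_const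
        (B0 ^ ((p-1)/4)) |>.const_mul (β/(p+1))
      simpa using this
    have hev := hlim.eventually (eventually_le_nhds hζ)
    filter_upwards [hev, hK] with n hn hKn
    refine normalizeT hp hβ (hV n) ht hζ (Or.inl ⟨ht0.symm, ?_⟩)
    have hb := pot_piece hp (hV n) (le_refl (massSq (V n))) hKn hB0
    calc β/(p+1) * potential p (V n)
        ≤ β/(p+1) * (2 ^ ((p-1)/2) * ((massSq (V n)) ^ ((p-1)/4) * massSq (V n))
          * B0 ^ ((p-1)/4)) := mul_le_mul_of_nonneg_left hb hcβ.le
      _ ≤ ζ := hn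
  · -- t > 0
    have hrat : Tendsto (fun n => t / massSq (V n)) atTop (nhds 1) := by
      have := (tendsto_const_nhds (x := t)).div hm (ne_of_gt ht0)
      simpa [div_self (ne_of_gt ht0), Pi.div_def] using this
    have he1 : Tendsto (fun n => |t / massSq (V n) - 1| * B0) atTop (nhds 0) := by
      have h := ((hrat.sub_const 1).abs).mul_const B0
      simpa using h
    have hpow : Tendsto (fun n => |(t / massSq (V n)) ^ ((p+1)/2) - 1|) atTop
        (nhds 0) := by
      have hco : ContinuousAt (fun x : ℝ => x ^ ((p+1)/2)) 1 :=
        Real.continuousAt_rpow_const 1 _ (Or.inl one_ne_zero)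
      have h1 := hco.tendsto.comp hrat
      rw [Real.one_rpow] at h1
      have := (h1.sub_const 1).abs
      simpa using this
    set P0 := 2 ^ ((p-1)/2) * ((t+1) ^ ((p-1)/4) * (t+1)) * B0 ^ ((p-1)/4) with hP0
    have hP00 : 0 ≤ P0 := by
      rw [hP0]
      have : (0:ℝ) ≤ t + 1 := by linarith
      positivity
    have he2 : Tendsto (fun n => β/(p+1) * (|(t / massSq (V n)) ^ ((p+1)/2) - 1|
        * P0)) atTop (nhds 0) := by
      have := (hpow.mul_const P0).const_mul (β/(p+1))
      simpa using this
    have hev1 := he1.eventually (eventually_le_nhds (half_pos hζ))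
    have hev2 := he2.eventually (eventually_le_nhds (half_pos hζ))
    have hevm : ∀ᶠ n in atTop, t/2 < massSq (V n) :=
      hm.eventually (eventually_gt_nhds (by linarith))
    have hevM : ∀ᶠ n in atTop, massSq (V n) ≤ t + 1 :=
      hm.eventually (eventually_le_nhds (by linarith))
    filter_upwards [hev1, hev2, hevm, hevM, hK] with n h1 h2 hm2 hM2 hKn
    have hmpos : 0 < massSq (V n) := lt_of_lt_of_le (by linarith) (le_refl _)
    refine normalizeT hp hβ (hV n) ht hζ (Or.inr ⟨hmpos, ?_, ?_⟩)
    · calc |t / massSq (V n) - 1| * kinetic (V n)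
          ≤ |t / massSq (V n) - 1| * B0 :=
            mul_le_mul_of_nonneg_left hKn (abs_nonneg _)
        _ ≤ ζ/2 := h1
    · have hb := pot_piece hp (hV n) hM2 hKn hB0
      have : potential p (V n) ≤ P0 := by rw [hP0]; exact hb
      calc β/(p+1) * (|(t / massSq (V n)) ^ ((p+1)/2) - 1| * potential p (V n))
          ≤ β/(p+1) * (|(t / massSq (V n)) ^ ((p+1)/2) - 1| * P0) := by
            refine mul_le_mul_of_nonneg_left ?_ hcβ.le
            exact mul_le_mul_of_nonneg_left this (abs_nonneg _)
        _ ≤ ζ/2 := h2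
  
end
noncomputable section

open MeasureTheory Filter Complex Real

lemma master {p α β γ μ s γA γB γC B0 : ℝ} (hp : 1 < p) (hp5 : p < 5)
    (hα : 0 < α) (hβ : 0 < β) (hγA : 0 < γA) (hγB : 0 ≤ γB) (hγC : 0 ≤ γC)
    (A B C : ℕ → ℝ → ℂ)
    (hH1 : ∀ n, InH1 (A n) ∧ InH1 (B n) ∧ InH1 (C n))
    (hmA : Tendsto (fun n => massSq (A n)) atTop (nhds γA))
    (hmB : Tendsto (fun n => massSq (B n)) atTop (nhds γB))
    (hmC : Tendsto (fun n => massSq (C n)) atTop (nhds γC))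
    (hK : ∀ᶠ n in atTop, kinetic (A n) + kinetic (B n) + kinetic (C n) ≤ B0)
    (hB0 : 0 ≤ B0)
    (Hcomp : ∀ w vB vC : ℝ → ℂ, InH1 w → InH1 vB → InH1 vC → massSq w = γA →
      massSq vB = γB → massSq vC = γC →
      ∃ e ∈ constraintSet p α β γ μ s,
        e ≤ sgl p β w + sgl p β vB + sgl p β vC + α * Tint w vB vC)
    (inter : ℕ → ℝ)
    (hIb : ∀ n, |inter n| ≤ Tint (A n) (B n) (C n))
    (hE : Tendsto (fun n => sgl p β (A n) + sgl p β (B n) + sgl p β (C n)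
      - α * inter n) atTop (nhds (Iinf p α β γ μ s))) :
    ∃ δ > (0:ℝ), ∀ᶠ n in atTop, δ ≤ Real.sqrt (kinetic (A n)) := by
  have hcβ : 0 < β/(p+1) := div_pos hβ (by linarith)
  have hq1 : (0:ℝ) < (p-1)/4 := by linarith
  obtain ⟨w, hw1, hwm, hwdec, hwneg⟩ := bump_exists hp hp5 hβ hγA
  set η := -(sgl p β w) with hη
  have hη0 : 0 < η := by rw [hη, sgl]; linarith [hwneg]
  by_contra hcon
  push_neg at hcon
  -- frequently small kinetic energy for the A component
  have hfreq : ∀ δ : ℝ, 0 < δ → ∃ᶠ n in atTop, Real.sqrt (kinetic (A n)) < δ := by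
    intro δ hδ
    have := hcon δ hδ
    exact this
  -- choose the smallness threshold ε
  set A1 := β/(p+1) * (2 ^ ((p-1)/2) * ((γA+1) ^ ((p-1)/4) * (γA+1))) with hA1
  set A2 := α * (Real.sqrt 2 * (γA+1) ^ ((1:ℝ)/4)
      * (Real.sqrt (γB+1) * Real.sqrt (γC+1))) with hA2
  have hA10 : 0 ≤ A1 := by
    rw [hA1]
    have : (0:ℝ) ≤ γA + 1 := by linarith
    positivity
  have hA20 : 0 ≤ A2 := by
    rw [hA2]
    have : (0:ℝ) ≤ γA + 1 := by linarith
    positivity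
  obtain ⟨ε1, hε10, hε11, hε1P⟩ := exists_small_rpow hA10 hq1 (by positivity : (0:ℝ) < η/16)
  obtain ⟨ε2, hε20, hε21, hε2P⟩ :=
    exists_small_rpow hA20 (by norm_num : (0:ℝ) < 1/4) (by positivity : (0:ℝ) < η/16)
  set ε := min ε1 ε2 with hε
  have hε0 : 0 < ε := lt_min hε10 hε20
  -- eventual facts
  have EvA : ∀ᶠ n in atTop, massSq (A n) ≤ γA + 1 :=
    hmA.eventually (eventually_le_nhds (by linarith))
  have EvB : ∀ᶠ n in atTop, massSq (B n) ≤ γB + 1 :=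
    hmB.eventually (eventually_le_nhds (by linarith))
  have EvC : ∀ᶠ n in atTop, massSq (C n) ≤ γC + 1 :=
    hmC.eventually (eventually_le_nhds (by linarith))
  have EvE : ∀ᶠ n in atTop, |sgl p β (A n) + sgl p β (B n) + sgl p β (C n)
      - α * inter n - Iinf p α β γ μ s| < η/8 := by
    have h := Metric.tendsto_nhds.mp hE (η/8) (by positivity)
    refine h.mono fun n hn => ?_
    rwa [Real.dist_eq] at hn
  have hKB : ∀ᶠ n in atTop, kinetic (B n) ≤ B0 := by
    refine hK.mono fun n hn => ?_
    have := kinetic_nonneg (A n)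
    have := kinetic_nonneg (C n)
    linarith
  have hKC : ∀ᶠ n in atTop, kinetic (C n) ≤ B0 := by
    refine hK.mono fun n hn => ?_
    have := kinetic_nonneg (A n)
    have := kinetic_nonneg (B n)
    linarith
  have EvNB := eventually_normalizeT hp hp5 hβ hB0 (fun n => (hH1 n).2.1) hγB hmB hKB
    (by positivity : (0:ℝ) < η/8)
  have EvNC := eventually_normalizeT hp hp5 hβ hB0 (fun n => (hH1 n).2.2) hγC hmC hKC
    (by positivity : (0:ℝ) < η/8)
  -- pick a bad index n
  have hcomb := ((((((EvA.and EvB).and EvC).and EvE).and EvNB).and EvNC)).and_frequently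
    (hfreq (Real.sqrt ε) (Real.sqrt_pos.mpr hε0))
  obtain ⟨n, ⟨⟨⟨⟨⟨hA', hB'⟩, hC'⟩, hE'⟩, hNB⟩, hNC⟩, hsmall⟩ := hcomb.exists
  -- kinetic of A n is small
  have hk1 : kinetic (A n) ≤ ε := by
    have h1 : kinetic (A n) = (Real.sqrt (kinetic (A n)))^2 :=
      (Real.sq_sqrt (kinetic_nonneg _)).symm
    rw [h1]
    calc (Real.sqrt (kinetic (A n)))^2 ≤ (Real.sqrt ε)^2 := by
          apply pow_le_pow_left₀ (Real.sqrt_nonneg _) hsmall.le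
      _ = ε := Real.sq_sqrt hε0.le
  have hk10 : 0 ≤ kinetic (A n) := kinetic_nonneg _
  -- potential and interaction of the A-component are small
  have R1 : β/(p+1) * potential p (A n) ≤ η/16 := by
    have hb := pot_piece hp (hH1 n).1 hA' (le_refl (kinetic (A n))) hk10
    have hchain : β/(p+1) * potential p (A n) ≤ A1 * (kinetic (A n)) ^ ((p-1)/4) := by
      rw [hA1]
      calc β/(p+1) * potential p (A n)
          ≤ β/(p+1) * (2 ^ ((p-1)/2) * ((γA+1) ^ ((p-1)/4) * (γA+1))
            * (kinetic (A n)) ^ ((p-1)/4)) := mul_le_mul_of_nonneg_left hb hcβ.le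
        _ = β/(p+1) * (2 ^ ((p-1)/2) * ((γA+1) ^ ((p-1)/4) * (γA+1)))
            * (kinetic (A n)) ^ ((p-1)/4) := by ring
    exact hchain.trans (hε1P _ hk10 (hk1.trans (min_le_left _ _)))
  have R2 : α * Tint (A n) (B n) (C n) ≤ η/16 := by
    have hb := tint_piece (hH1 n).1 (hH1 n).2.1 (hH1 n).2.2 hA' hB' hC'
      (le_refl (kinetic (A n))) hk10
    have hchain : α * Tint (A n) (B n) (C n)
        ≤ A2 * (kinetic (A n)) ^ ((1:ℝ)/4) := by
      rw [hA2]
      calc α * Tint (A n) (B n) (C n)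
          ≤ α * (Real.sqrt 2 * (γA+1) ^ ((1:ℝ)/4) * (Real.sqrt (γB+1) * Real.sqrt (γC+1))
            * (kinetic (A n)) ^ ((1:ℝ)/4)) := mul_le_mul_of_nonneg_left hb hα.le
        _ = α * (Real.sqrt 2 * (γA+1) ^ ((1:ℝ)/4) * (Real.sqrt (γB+1) * Real.sqrt (γC+1)))
            * (kinetic (A n)) ^ ((1:ℝ)/4) := by ring
    exact hchain.trans (hε2P _ hk10 (hk1.trans (min_le_right _ _)))
  -- normalized components
  obtain ⟨vB, hvB1, hvBm, hvBs⟩ := hNB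
  obtain ⟨vC, hvC1, hvCm, hvCs⟩ := hNC
  -- translate the bump far away
  obtain ⟨R, hR⟩ := exists_translate_small hw1 hwdec hvB1 hvC1
    (by positivity : (0:ℝ) < η/(8*α))
  set wR := fun x => w (x - R) with hwR
  have hwR1 : InH1 wR := hw1.translate R
  have hwRm : massSq wR = γA := by rw [hwR, massSq_translate, hwm]
  have hwRs : sgl p β wR = -η := by rw [hwR, sgl_translate hw1, hη]; ring
  -- competitor
  obtain ⟨e, hemem, hele⟩ := Hcomp wR vB vC hwR1 hvB1 hvC1 hwRm hvBm hvCm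
  have hIe : Iinf p α β γ μ s ≤ e := Iinf_le_of_mem hp hp5 hα hβ hemem
  -- chain of inequalities
  have hTint : α * Tint wR vB vC ≤ η/8 := by
    have := mul_le_mul_of_nonneg_left hR hα.le
    calc α * Tint wR vB vC ≤ α * (η/(8*α)) := this
      _ = η/8 := by field_simp
  have step1 : e ≤ sgl p β (B n) + sgl p β (C n) - η + η/8 + η/8 + η/8 := by
    have := hele
    rw [hwRs] at this
    linarith [hvBs, hvCs, hTint]
  -- lower bound on sgl B + sgl C from the energy of the sequence
  have hEn : sgl p β (A n) + sgl p β (B n) + sgl p β (C n) - α * inter n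
      ≤ Iinf p α β γ μ s + η/8 := by
    have := abs_le.mp hE'.le
    linarith [this.2]
  have hsglA : -(η/16) ≤ sgl p β (A n) := by
    rw [sgl]
    linarith [R1, hk10]
  have hinter : α * inter n ≤ η/16 := by
    have h1 : α * inter n ≤ α * |inter n| :=
      mul_le_mul_of_nonneg_left (le_abs_self _) hα.le
    have h2 : α * |inter n| ≤ α * Tint (A n) (B n) (C n) :=
      mul_le_mul_of_nonneg_left (hIb n) hα.le
    linarith [R2]
  have step2 : sgl p β (B n) + sgl p β (C n)
      ≤ Iinf p α β γ μ s + η/8 + η/16 + η/16 := by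
    linarith [hEn, hsglA, hinter]
  linarith [hIe, step1, step2, hη0]

end
noncomputable section

open MeasureTheory Filter Complex Real

theorem minimizing_sequence_gradient_bounds
    (p α β γ μ s : ℝ) (hp : 1 < p) (hp5 : p < 5) (hα : 0 < α) (hβ : 0 < β)
    (hγ : 0 ≤ γ) (hμ : 0 ≤ μ) (hs : 0 ≤ s)
    (u1 u2 u3 : ℕ → ℝ → ℂ) (hmin : MinimizingSeq p α β γ μ s u1 u2 u3) :
    (∃ B > (0 : ℝ), ∀ᶠ n in Filter.atTop,
        kinetic (u1 n) + kinetic (u2 n) + kinetic (u3 n) ≤ B) ∧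
    (0 < γ → ∃ δ₁ > (0 : ℝ), ∀ᶠ n in Filter.atTop,
        δ₁ ≤ Real.sqrt (kinetic (u1 n))) ∧
    (0 < μ → ∃ δ₂ > (0 : ℝ), ∀ᶠ n in Filter.atTop,
        δ₂ ≤ Real.sqrt (kinetic (u2 n))) ∧
    (0 < s → ∃ δ₃ > (0 : ℝ), ∀ᶠ n in Filter.atTop,
        δ₃ ≤ Real.sqrt (kinetic (u3 n))) := by
  obtain ⟨hH1, hm1, hm2, hm3, hE⟩ := hmin
  set D := Dconst p α β (γ+1) (μ+1) (s+1) with hD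
  set B0 := max 1 (4*(Iinf p α β γ μ s + 1 + D)) with hB0def
  have hB0pos : (0:ℝ) < B0 := lt_of_lt_of_le one_pos (le_max_left _ _)
  -- part (i)
  have part1 : ∀ᶠ n in atTop,
      kinetic (u1 n) + kinetic (u2 n) + kinetic (u3 n) ≤ B0 := by
    have Ev1 : ∀ᶠ n in atTop, massSq (u1 n) ≤ γ + 1 :=
      hm1.eventually (eventually_le_nhds (by linarith))
    have Ev2 : ∀ᶠ n in atTop, massSq (u2 n) ≤ μ + 1 :=
      hm2.eventually (eventually_le_nhds (by linarith))
    have Ev3 : ∀ᶠ n in atTop, massSq (u3 n) ≤ s + 1 :=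
      hm3.eventually (eventually_le_nhds (by linarith))
    have EvE : ∀ᶠ n in atTop, energy p α β (u1 n) (u2 n) (u3 n)
        ≤ Iinf p α β γ μ s + 1 :=
      hE.eventually (eventually_le_nhds (by linarith))
    filter_upwards [Ev1, Ev2, Ev3, EvE] with n h1 h2 h3 h4
    have := energy_lower hp hp5 hα hβ (hH1 n).1 (hH1 n).2.1 (hH1 n).2.2 h1 h2 h3
    have hle : kinetic (u1 n) + kinetic (u2 n) + kinetic (u3 n)
        ≤ 4*(Iinf p α β γ μ s + 1 + D) := by
      rw [hD]
      linarith
    exact hle.trans (le_max_right _ _)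
  refine ⟨⟨B0, hB0pos, part1⟩, ?_, ?_, ?_⟩
  · -- part (ii)
    intro hγ0
    refine master (γ := γ) (μ := μ) (s := s) hp hp5 hα hβ hγ0 hμ hs u1 u2 u3 hH1 hm1 hm2 hm3 part1 hB0pos.le
      ?_ (fun n => interaction (u1 n) (u2 n) (u3 n))
      (fun n => abs_interaction_le (hH1 n).1 (hH1 n).2.1 (hH1 n).2.2) ?_
    · intro w vB vC hw hvB hvC hmw hmB hmC
      refine ⟨energy p α β w vB vC, ⟨w, vB, vC, hw, hvB, hvC, hmw, hmB, hmC, rfl⟩, ?_⟩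
      rw [energy_eq_sgl]
      have h1 := (neg_le_abs (interaction w vB vC)).trans
        (abs_interaction_le hw hvB hvC)
      have h2 := mul_le_mul_of_nonneg_left h1 hα.le
      linarith
    · refine hE.congr fun n => ?_
      rw [energy_eq_sgl]
  · -- part (iii)
    intro hμ0
    refine master (γ := γ) (μ := μ) (s := s) hp hp5 hα hβ hμ0 hγ hs u2 u1 u3
      (fun n => ⟨(hH1 n).2.1, (hH1 n).1, (hH1 n).2.2⟩) hm2 hm1 hm3
      (part1.mono fun n h => by linarith) hB0pos.le
      ?_ (fun n => interaction (u1 n) (u2 n) (u3 n)) ?_ ?_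
    · intro w vB vC hw hvB hvC hmw hmB hmC
      refine ⟨energy p α β vB w vC, ⟨vB, w, vC, hvB, hw, hvC, hmB, hmw, hmC, rfl⟩, ?_⟩
      rw [energy_eq_sgl]
      have h1 := (neg_le_abs (interaction vB w vC)).trans
        (abs_interaction_le hvB hw hvC)
      have h2 := mul_le_mul_of_nonneg_left h1 hα.le
      rw [Tint_comm12] at h2
      linarith
    · intro n
      rw [← Tint_comm12]
      exact abs_interaction_le (hH1 n).1 (hH1 n).2.1 (hH1 n).2.2
    · refine hE.congr fun n => ?_
      rw [energy_eq_sgl]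
      ring
  · -- part (iv)
    intro hs0
    refine master (γ := γ) (μ := μ) (s := s) hp hp5 hα hβ hs0 hμ hγ u3 u2 u1
      (fun n => ⟨(hH1 n).2.2, (hH1 n).2.1, (hH1 n).1⟩) hm3 hm2 hm1
      (part1.mono fun n h => by linarith) hB0pos.le
      ?_ (fun n => interaction (u1 n) (u2 n) (u3 n)) ?_ ?_
    · intro w vB vC hw hvB hvC hmw hmB hmC
      refine ⟨energy p α β vC vB w, ⟨vC, vB, w, hvC, hvB, hw, hmC, hmB, hmw, rfl⟩, ?_⟩
      rw [energy_eq_sgl]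
      have h1 := (neg_le_abs (interaction vC vB w)).trans
        (abs_interaction_le hvC hvB hw)
      have h2 := mul_le_mul_of_nonneg_left h1 hα.le
      rw [Tint_comm13] at h2
      linarith
    · intro n
      rw [← Tint_comm13]
      exact abs_interaction_le (hH1 n).1 (hH1 n).2.1 (hH1 n).2.2
    · refine hE.congr fun n => ?_
      rw [energy_eq_sgl]
      ring

end
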